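/- arXiv:1702.08486 — 7 statements merged into one kernel-verified Lean document; each statement's English description precedes it below -/
import Mathlib

section
/- Cauchy–Schwarz inequality for upper Burkill integrals: for interval functions g₁, g₂ on R, (upper ∫_R g₁·g₂)² ≤ (upper ∫_R g₁²)·(upper ∫_R g₂²), assuming the right-hand side quantities are finite and the upper integral of g₁g₂ is nonnegative. -/
open Filter Finset

/-- A division of the interval `[a, b]` into finitely many non-overlapping
subintervals, given by division points `P 0 = a < P 1 < ⋯ < P n = b`. -/
structure Division (a b : ℝ) where
  n : ℕ
  P : ℕ → ℝ
  npos : 0 < n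
  mono : ∀ i < n, P i < P (i + 1)
  first : P 0 = a
  last : P n = b

/-- The Riemann sum of the interval function `g` over the division `D`. -/
def Division.sum {a b : ℝ} (D : Division a b) (g : ℝ → ℝ → ℝ) : ℝ :=
  ∑ i ∈ Finset.range D.n, g (D.P i) (D.P (i + 1))

/-- `D.normLt e` means that the norm (mesh) of the division `D` is `< e`. -/
def Division.normLt {a b : ℝ} (D : Division a b) (e : ℝ) : Prop :=
  ∀ i < D.n, D.P (i + 1) - D.P i < e

/-- A Riemann succession: a sequence of divisions whose norms tend to `0`. -/
def IsRiemannSuccession {a b : ℝ} (D : ℕ → Division a b) : Prop :=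
  ∀ e > 0, ∃ N, ∀ n ≥ N, (D n).normLt e

/-- The upper Burkill integral of `g` over `[a, b]` (with respect to the family
of all Riemann successions): the supremum over all Riemann successions of the
limsup of the Riemann sums. -/
noncomputable def upperBurkill (g : ℝ → ℝ → ℝ) (a b : ℝ) : EReal :=
  sSup {L : EReal | ∃ D : ℕ → Division a b, IsRiemannSuccession D ∧
    L = Filter.limsup (fun n => (((D n).sum g : ℝ) : EReal)) Filter.atTop}

/-- The lower Burkill integral of `g` over `[a, b]`: the infimum over all
Riemann successions of the liminf of the Riemann sums. -/
noncomputable def lowerBurkill (g : ℝ → ℝ → ℝ) (a b : ℝ) : EReal :=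
  sInf {L : EReal | ∃ D : ℕ → Division a b, IsRiemannSuccession D ∧
    L = Filter.liminf (fun n => (((D n).sum g : ℝ) : EReal)) Filter.atTop}

/-- The uniform division of `[a, b]` into `k + 1` equal parts. -/
noncomputable def unifDiv (a b : ℝ) (hab : a < b) (k : ℕ) : Division a b where
  n := k + 1
  P := fun i => a + i * ((b - a) / (k + 1))
  npos := Nat.succ_pos k
  mono := by
    intro i _
    have hc : (0:ℝ) < (b - a) / (k + 1) := div_pos (by linarith) (by positivity)
    push_cast
    nlinarith
  first := by simp
  last := by
    have hk : ((k:ℝ) + 1) ≠ 0 := by positivity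
    push_cast
    field_simp
    ring

lemma unif_succession (a b : ℝ) (hab : a < b) :
    IsRiemannSuccession (unifDiv a b hab) := by
  intro e he
  obtain ⟨N, hN⟩ := exists_nat_gt ((b - a) / e)
  refine ⟨N, fun n hn i _ => ?_⟩
  have h1 : (b - a) / e < (n:ℝ) + 1 := by
    have : (N:ℝ) ≤ n := by exact_mod_cast hn
    linarith
  have hlt : (b - a) / ((n:ℝ) + 1) < e := by
    rw [div_lt_iff₀ (by positivity)]
    rw [div_lt_iff₀ he] at h1
    nlinarith
  show a + (↑(i+1) : ℝ) * ((b - a) / (n + 1)) - (a + i * ((b - a) / (n + 1))) < e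
  push_cast
  have hid : ∀ x c : ℝ, a + (x + 1) * c - (a + x * c) = c := by intro x c; ring
  rw [hid]
  exact hlt

/-- (2.18a): Cauchy–Schwarz inequality for upper Burkill integrals:
`(upper ∫ g₁·g₂)² ≤ (upper ∫ g₁²) · (upper ∫ g₂²)`, assuming the two quantities on the
right are finite and the upper integral of `g₁·g₂` is nonnegative. -/
theorem upperBurkill_cauchy_schwarz (g₁ g₂ : ℝ → ℝ → ℝ) (a b : ℝ) (hab : a < b)
    (B C : ℝ)
    (hB : upperBurkill (fun x y => g₁ x y ^ 2) a b = (B : EReal))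
    (hC : upperBurkill (fun x y => g₂ x y ^ 2) a b = (C : EReal))
    (h0 : 0 ≤ upperBurkill (fun x y => g₁ x y * g₂ x y) a b) :
    upperBurkill (fun x y => g₁ x y * g₂ x y) a b *
      upperBurkill (fun x y => g₁ x y * g₂ x y) a b ≤ ((B * C : ℝ) : EReal) := by
  -- B and C are nonnegative
  have hBnn : (0:ℝ) ≤ B := by
    have h1 : (0:EReal) ≤ limsup
        (fun n => (((unifDiv a b hab n).sum (fun x y => g₁ x y ^ 2) : ℝ) : EReal)) atTop := by
      refine le_limsup_of_frequently_le (Frequently.of_forall fun n => ?_)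
      have : (0:ℝ) ≤ (unifDiv a b hab n).sum (fun x y => g₁ x y ^ 2) :=
        Finset.sum_nonneg fun i _ => sq_nonneg _
      exact_mod_cast this
    have h2 : limsup
        (fun n => (((unifDiv a b hab n).sum (fun x y => g₁ x y ^ 2) : ℝ) : EReal)) atTop
        ≤ (B : EReal) := hB ▸ le_sSup ⟨_, unif_succession a b hab, rfl⟩
    exact_mod_cast h1.trans h2
  have hCnn : (0:ℝ) ≤ C := by
    have h1 : (0:EReal) ≤ limsup
        (fun n => (((unifDiv a b hab n).sum (fun x y => g₂ x y ^ 2) : ℝ) : EReal)) atTop := by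
      refine le_limsup_of_frequently_le (Frequently.of_forall fun n => ?_)
      have : (0:ℝ) ≤ (unifDiv a b hab n).sum (fun x y => g₂ x y ^ 2) :=
        Finset.sum_nonneg fun i _ => sq_nonneg _
      exact_mod_cast this
    have h2 : limsup
        (fun n => (((unifDiv a b hab n).sum (fun x y => g₂ x y ^ 2) : ℝ) : EReal)) atTop
        ≤ (C : EReal) := hC ▸ le_sSup ⟨_, unif_succession a b hab, rfl⟩
    exact_mod_cast h1.trans h2
  -- key bound
  have key : ∀ ε : ℝ, 0 < ε → upperBurkill (fun x y => g₁ x y * g₂ x y) a b ≤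
      ((Real.sqrt ((B + ε) * (C + ε)) : ℝ) : EReal) := by
    intro ε hε
    refine sSup_le ?_
    rintro L ⟨D, hD, rfl⟩
    have hB' : limsup (fun n => (((D n).sum (fun x y => g₁ x y ^ 2) : ℝ) : EReal)) atTop
        < ((B + ε : ℝ) : EReal) := by
      have hle : limsup (fun n => (((D n).sum (fun x y => g₁ x y ^ 2) : ℝ) : EReal)) atTop
          ≤ upperBurkill (fun x y => g₁ x y ^ 2) a b := le_sSup ⟨D, hD, rfl⟩
      rw [hB] at hle
      refine lt_of_le_of_lt hle ?_
      exact_mod_cast (by linarith : B < B + ε)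
    have hC' : limsup (fun n => (((D n).sum (fun x y => g₂ x y ^ 2) : ℝ) : EReal)) atTop
        < ((C + ε : ℝ) : EReal) := by
      have hle : limsup (fun n => (((D n).sum (fun x y => g₂ x y ^ 2) : ℝ) : EReal)) atTop
          ≤ upperBurkill (fun x y => g₂ x y ^ 2) a b := le_sSup ⟨D, hD, rfl⟩
      rw [hC] at hle
      refine lt_of_le_of_lt hle ?_
      exact_mod_cast (by linarith : C < C + ε)
    have hB'' := eventually_lt_of_limsup_lt hB'
    have hC'' := eventually_lt_of_limsup_lt hC'
    refine limsup_le_of_le (by isBoundedDefault) ?_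
    filter_upwards [hB'', hC''] with n h1 h2
    have h1' : (D n).sum (fun x y => g₁ x y ^ 2) < B + ε := by exact_mod_cast h1
    have h2' : (D n).sum (fun x y => g₂ x y ^ 2) < C + ε := by exact_mod_cast h2
    have hnn1 : (0:ℝ) ≤ (D n).sum (fun x y => g₁ x y ^ 2) :=
      Finset.sum_nonneg fun i _ => sq_nonneg _
    have hnn2 : (0:ℝ) ≤ (D n).sum (fun x y => g₂ x y ^ 2) :=
      Finset.sum_nonneg fun i _ => sq_nonneg _
    have hcs : ((D n).sum (fun x y => g₁ x y * g₂ x y)) ^ 2 ≤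
        ((D n).sum (fun x y => g₁ x y ^ 2)) * ((D n).sum (fun x y => g₂ x y ^ 2)) :=
      Finset.sum_mul_sq_le_sq_mul_sq _ _ _
    have hM : ((D n).sum (fun x y => g₁ x y * g₂ x y)) ^ 2 ≤ (B + ε) * (C + ε) := by
      nlinarith
    have : (D n).sum (fun x y => g₁ x y * g₂ x y) ≤ Real.sqrt ((B + ε) * (C + ε)) := by
      calc (D n).sum (fun x y => g₁ x y * g₂ x y)
          ≤ |(D n).sum (fun x y => g₁ x y * g₂ x y)| := le_abs_self _
        _ = Real.sqrt (((D n).sum (fun x y => g₁ x y * g₂ x y)) ^ 2) :=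
            (Real.sqrt_sq_eq_abs _).symm
        _ ≤ Real.sqrt ((B + ε) * (C + ε)) := Real.sqrt_le_sqrt hM
    exact_mod_cast this
  set U := upperBurkill (fun x y => g₁ x y * g₂ x y) a b with hUdef
  have hUtop : U ≠ ⊤ := ne_top_of_le_ne_top (EReal.coe_ne_top _) (key 1 one_pos)
  have hUbot : U ≠ ⊥ := by
    intro h
    rw [h] at h0
    simp at h0
  have hU : U = ((U.toReal : ℝ) : EReal) := (EReal.coe_toReal hUtop hUbot).symm
  set u := U.toReal with hu
  have hunn : (0:ℝ) ≤ u := by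
    rw [hU] at h0
    exact_mod_cast h0
  rw [hU, ← EReal.coe_mul, EReal.coe_le_coe_iff]
  have hkey : ∀ ε ∈ Set.Ioi (0:ℝ), u * u ≤ (B + ε) * (C + ε) := by
    intro ε hε
    have h := key ε hε
    rw [hU, EReal.coe_le_coe_iff] at h
    have hMnn : (0:ℝ) ≤ (B + ε) * (C + ε) := by
      have : (0:ℝ) < ε := hε
      nlinarith
    nlinarith [Real.sq_sqrt hMnn, Real.sqrt_nonneg ((B + ε) * (C + ε))]
  have htend : Tendsto (fun ε : ℝ => (B + ε) * (C + ε)) (nhdsWithin 0 (Set.Ioi 0)) (nhds (B * C)) := by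
    have hcont : Continuous fun ε : ℝ => (B + ε) * (C + ε) := (continuous_const.add continuous_id).mul (continuous_const.add continuous_id)
    have h := (hcont.tendsto 0).mono_left (nhdsWithin_le_nhds (s := Set.Ioi (0:ℝ)))
    simpa using h
  exact ge_of_tendsto htend (eventually_nhdsWithin_of_forall hkey)
end

section
/- Hölder inequality for upper Burkill integrals: for p, q > 1 with 1/p + 1/q = 1 and nonnegative interval functions g₁, g₂, the upper Burkill integral of g₁·g₂ over R is at most (upper ∫_R g₁^p)^{1/p} · (upper ∫_R g₂^q)^{1/q}, assuming the right-hand side quantities are finite. -/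
open Filter Finset

lemma Division.P_mono {a b : ℝ} (D : Division a b) :
    ∀ j ≤ D.n, ∀ i ≤ j, D.P i ≤ D.P j := by
  intro j
  induction j with
  | zero => intro _ i hi; simp [Nat.le_zero.mp hi]
  | succ j ih =>
    intro hj i hi
    rcases Nat.eq_or_lt_of_le hi with rfl | h
    · exact le_rfl
    · exact (ih (le_of_lt (Nat.lt_of_lt_of_le (Nat.lt_succ_self j) hj))
        i (Nat.lt_succ_iff.mp h)).trans
        (D.mono j (Nat.lt_of_lt_of_le (Nat.lt_succ_self j) hj)).le

/-- (2.19a): Hölder inequality for upper Burkill integrals: for `p, q > 1` with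
`1/p + 1/q = 1` and nonnegative interval functions `g₁, g₂`,
`upper ∫ g₁·g₂ ≤ (upper ∫ g₁^p)^{1/p} · (upper ∫ g₂^q)^{1/q}`, assuming the
right-hand side quantities are finite. -/
theorem upperBurkill_holder (g₁ g₂ : ℝ → ℝ → ℝ) (a b p q : ℝ) (hab : a < b)
    (hp : 1 < p) (hq : 1 < q) (hpq : 1 / p + 1 / q = 1)
    (h₁ : ∀ x y : ℝ, a ≤ x → x < y → y ≤ b → 0 ≤ g₁ x y)
    (h₂ : ∀ x y : ℝ, a ≤ x → x < y → y ≤ b → 0 ≤ g₂ x y)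
    (B C : ℝ)
    (hB : upperBurkill (fun x y => g₁ x y ^ p) a b = (B : EReal))
    (hC : upperBurkill (fun x y => g₂ x y ^ q) a b = (C : EReal)) :
    upperBurkill (fun x y => g₁ x y * g₂ x y) a b
      ≤ ((B ^ (1 / p) * C ^ (1 / q) : ℝ) : EReal) := by
  have hpq' : Real.HolderConjugate p q := Real.holderConjugate_iff.mpr ⟨hp, by simpa [one_div] using hpq⟩
  apply sSup_le
  rintro L ⟨D, hD, rfl⟩
  -- basic facts about each division
  have hbound : ∀ (n : ℕ) (i : ℕ), i < (D n).n →
      a ≤ (D n).P i ∧ (D n).P i < (D n).P (i+1) ∧ (D n).P (i+1) ≤ b := by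
    intro n i hi
    refine ⟨?_, (D n).mono i hi, ?_⟩
    · have := (D n).P_mono i hi.le 0 (Nat.zero_le _); rwa [(D n).first] at this
    · have := (D n).P_mono (D n).n le_rfl (i+1) hi; rwa [(D n).last] at this
  set S₁ : ℕ → ℝ := fun n => (D n).sum (fun x y => g₁ x y ^ p) with hS₁
  set S₂ : ℕ → ℝ := fun n => (D n).sum (fun x y => g₂ x y ^ q) with hS₂
  set S : ℕ → ℝ := fun n => (D n).sum (fun x y => g₁ x y * g₂ x y) with hS
  have hg₁ : ∀ n, ∀ i ∈ Finset.range (D n).n, 0 ≤ g₁ ((D n).P i) ((D n).P (i+1)) := by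
    intro n i hi
    obtain ⟨ha, hm, hb'⟩ := hbound n i (Finset.mem_range.mp hi)
    exact h₁ _ _ ha hm hb'
  have hg₂ : ∀ n, ∀ i ∈ Finset.range (D n).n, 0 ≤ g₂ ((D n).P i) ((D n).P (i+1)) := by
    intro n i hi
    obtain ⟨ha, hm, hb'⟩ := hbound n i (Finset.mem_range.mp hi)
    exact h₂ _ _ ha hm hb'
  have hS₁nn : ∀ n, 0 ≤ S₁ n := fun n =>
    Finset.sum_nonneg fun i hi => Real.rpow_nonneg (hg₁ n i hi) p
  have hS₂nn : ∀ n, 0 ≤ S₂ n := fun n =>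
    Finset.sum_nonneg fun i hi => Real.rpow_nonneg (hg₂ n i hi) q
  have hSnn : ∀ n, 0 ≤ S n := fun n =>
    Finset.sum_nonneg fun i hi => mul_nonneg (hg₁ n i hi) (hg₂ n i hi)
  -- limsup bounds
  have hB' : limsup (fun n => ((S₁ n : ℝ) : EReal)) atTop ≤ (B : EReal) := by
    rw [← hB]; exact le_sSup ⟨D, hD, rfl⟩
  have hC' : limsup (fun n => ((S₂ n : ℝ) : EReal)) atTop ≤ (C : EReal) := by
    rw [← hC]; exact le_sSup ⟨D, hD, rfl⟩
  have hBnn : 0 ≤ B := by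
    have h0 : ((0:ℝ) : EReal) ≤ limsup (fun n => ((S₁ n : ℝ) : EReal)) atTop := by
      refine le_limsup_of_frequently_le
        (Filter.Frequently.of_forall fun n => EReal.coe_le_coe_iff.mpr (hS₁nn n))
        (by isBoundedDefault)
    exact_mod_cast h0.trans hB'
  have hCnn : 0 ≤ C := by
    have h0 : ((0:ℝ) : EReal) ≤ limsup (fun n => ((S₂ n : ℝ) : EReal)) atTop := by
      refine le_limsup_of_frequently_le
        (Filter.Frequently.of_forall fun n => EReal.coe_le_coe_iff.mpr (hS₂nn n))
        (by isBoundedDefault)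
    exact_mod_cast h0.trans hC'
  -- Hölder per division
  have holder : ∀ n, S n ≤ S₁ n ^ (1/p) * S₂ n ^ (1/q) := fun n =>
    Real.inner_le_Lp_mul_Lq_of_nonneg _ hpq' (hg₁ n) (hg₂ n)
  -- key ε-bound
  have key : ∀ ε : ℝ, 0 < ε →
      limsup (fun n => ((S n : ℝ) : EReal)) atTop
        ≤ (((B + ε) ^ (1/p) * (C + ε) ^ (1/q) : ℝ) : EReal) := by
    intro ε hε
    have hBe : ∀ᶠ n in atTop, ((S₁ n : ℝ) : EReal) < ((B + ε : ℝ) : EReal) :=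
      eventually_lt_of_limsup_lt (lt_of_le_of_lt hB'
        (EReal.coe_lt_coe_iff.mpr (by linarith)))
    have hCe : ∀ᶠ n in atTop, ((S₂ n : ℝ) : EReal) < ((C + ε : ℝ) : EReal) :=
      eventually_lt_of_limsup_lt (lt_of_le_of_lt hC'
        (EReal.coe_lt_coe_iff.mpr (by linarith)))
    refine limsup_le_of_le (by isBoundedDefault) ?_
    filter_upwards [hBe, hCe] with n h1 h2
    have h1' : S₁ n ≤ B + ε := (EReal.coe_lt_coe_iff.mp h1).le
    have h2' : S₂ n ≤ C + ε := (EReal.coe_lt_coe_iff.mp h2).le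
    refine EReal.coe_le_coe_iff.mpr ((holder n).trans ?_)
    have := Real.rpow_le_rpow (hS₁nn n) h1' (by positivity : (0:ℝ) ≤ 1/p)
    have := Real.rpow_le_rpow (hS₂nn n) h2' (by positivity : (0:ℝ) ≤ 1/q)
    exact mul_le_mul (Real.rpow_le_rpow (hS₁nn n) h1' (by positivity))
      (Real.rpow_le_rpow (hS₂nn n) h2' (by positivity))
      (Real.rpow_nonneg (hS₂nn n) _) (Real.rpow_nonneg (by linarith) _)
  -- pass to the limit ε → 0⁺
  have hcont : Filter.Tendsto
      (fun ε : ℝ => (((B + ε) ^ (1/p) * (C + ε) ^ (1/q) : ℝ) : EReal))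
      (nhdsWithin 0 (Set.Ioi 0)) (nhds ((B ^ (1/p) * C ^ (1/q) : ℝ) : EReal)) := by
    have c1 : ContinuousAt (fun ε : ℝ => (B + ε) ^ (1/p) * (C + ε) ^ (1/q)) 0 := by
      apply ContinuousAt.mul
      · exact (Real.continuousAt_rpow_const _ _ (Or.inr (by positivity))).comp
          (by fun_prop)
      · exact (Real.continuousAt_rpow_const _ _ (Or.inr (by positivity))).comp
          (by fun_prop)
    have := (continuous_coe_real_ereal.continuousAt).comp c1
    have h0 : (fun ε : ℝ => (((B + ε) ^ (1/p) * (C + ε) ^ (1/q) : ℝ) : EReal)) 0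
        = ((B ^ (1/p) * C ^ (1/q) : ℝ) : EReal) := by norm_num
    rw [← h0]
    exact (this.tendsto).mono_left nhdsWithin_le_nhds
  refine ge_of_tendsto hcont ?_
  exact Filter.eventually_of_mem self_mem_nhdsWithin fun ε hε => key ε hε
end

section
/- Minkowski inequality for upper Burkill integrals: for p ≥ 1 and interval functions g₁, g₂, (upper ∫_R |g₁ + g₂|^p)^{1/p} ≤ (upper ∫_R |g₁|^p)^{1/p} + (upper ∫_R |g₂|^p)^{1/p}, assuming the right-hand side quantities are finite. -/
open Filter Finset

private lemma limsup_minkowski_aux (g₁ g₂ : ℝ → ℝ → ℝ) (a b p : ℝ) (hab : a < b)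
    (hp : 1 ≤ p) (B C : ℝ)
    (s1 s2 s3 : ℕ → ℝ)
    (hs1 : ∀ n, 0 ≤ s1 n) (hs2 : ∀ n, 0 ≤ s2 n)
    (key : ∀ n, s3 n ^ (1/p) ≤ s1 n ^ (1/p) + s2 n ^ (1/p))
    (hs3 : ∀ n, 0 ≤ s3 n)
    (h1 : limsup (fun n => ((s1 n : ℝ) : EReal)) atTop ≤ (B : EReal))
    (h2 : limsup (fun n => ((s2 n : ℝ) : EReal)) atTop ≤ (C : EReal)) :
    limsup (fun n => ((s3 n : ℝ) : EReal)) atTop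
      ≤ (((B ^ (1 / p) + C ^ (1 / p)) ^ p : ℝ) : EReal) := by
  have hp0 : 0 < p := lt_of_lt_of_le one_pos hp
  have hip : 0 < 1/p := by positivity
  have main : ∀ ε > (0:ℝ), limsup (fun n => ((s3 n : ℝ) : EReal)) atTop
      ≤ ((((B+ε) ^ (1/p) + (C+ε) ^ (1/p)) ^ p : ℝ) : EReal) := by
    intro ε hε
    have e1 : ∀ᶠ n in atTop, ((s1 n : ℝ) : EReal) < ((B + ε : ℝ) : EReal) :=
      Filter.eventually_lt_of_limsup_lt
        (lt_of_le_of_lt h1 (by exact_mod_cast lt_add_of_pos_right B hε))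
    have e2 : ∀ᶠ n in atTop, ((s2 n : ℝ) : EReal) < ((C + ε : ℝ) : EReal) :=
      Filter.eventually_lt_of_limsup_lt
        (lt_of_le_of_lt h2 (by exact_mod_cast lt_add_of_pos_right C hε))
    refine Filter.limsup_le_of_le (h := ?_)
    filter_upwards [e1, e2] with n h1n h2n
    have h1n' : s1 n ≤ B + ε := le_of_lt (by exact_mod_cast h1n)
    have h2n' : s2 n ≤ C + ε := le_of_lt (by exact_mod_cast h2n)
    have hBε : 0 ≤ B + ε := le_trans (hs1 n) h1n'
    have hCε : 0 ≤ C + ε := le_trans (hs2 n) h2n'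
    have step : s3 n ^ (1/p) ≤ (B+ε) ^ (1/p) + (C+ε) ^ (1/p) :=
      le_trans (key n) (add_le_add (Real.rpow_le_rpow (hs1 n) h1n' hip.le)
        (Real.rpow_le_rpow (hs2 n) h2n' hip.le))
    have := Real.rpow_le_rpow (Real.rpow_nonneg (hs3 n) _) step hp0.le
    rw [← Real.rpow_mul (hs3 n), one_div_mul_cancel hp0.ne', Real.rpow_one] at this
    exact_mod_cast this
  -- pass to the limit ε → 0⁺
  have cont : Tendsto (fun ε : ℝ => ((((B+ε) ^ (1/p) + (C+ε) ^ (1/p)) ^ p : ℝ) : EReal))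
      (nhdsWithin 0 (Set.Ioi 0)) (nhds (((B ^ (1/p) + C ^ (1/p)) ^ p : ℝ) : EReal)) := by
    have c1 : ContinuousAt (fun ε : ℝ => ((B+ε) ^ (1/p) + (C+ε) ^ (1/p)) ^ p) 0 := by
      have hB1 : ContinuousAt (fun ε : ℝ => (B+ε) ^ (1/p)) 0 :=
        ((continuous_const.add continuous_id).continuousAt).rpow_const (Or.inr hip.le)
      have hC1 : ContinuousAt (fun ε : ℝ => (C+ε) ^ (1/p)) 0 :=
        ((continuous_const.add continuous_id).continuousAt).rpow_const (Or.inr hip.le)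
      exact (hB1.add hC1).rpow_const (Or.inr hp0.le)
    have := (continuous_coe_real_ereal.continuousAt).comp c1
    have h := this.tendsto.mono_left (nhdsWithin_le_nhds (s := Set.Ioi (0:ℝ)))
    simpa [Function.comp_def] using h
  exact ge_of_tendsto cont (eventually_mem_nhdsWithin.mono fun ε hε => main ε hε)


/-- (2.20a): Minkowski inequality for upper Burkill integrals: for `p ≥ 1`,
`(upper ∫ |g₁ + g₂|^p)^{1/p} ≤ (upper ∫ |g₁|^p)^{1/p} + (upper ∫ |g₂|^p)^{1/p}`,
assuming the right-hand side quantities are finite.  (Stated equivalently with both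
sides raised to the `p`-th power, so as to remain in the extended reals.) -/
theorem upperBurkill_minkowski (g₁ g₂ : ℝ → ℝ → ℝ) (a b p : ℝ) (hab : a < b)
    (hp : 1 ≤ p) (B C : ℝ)
    (hB : upperBurkill (fun x y => |g₁ x y| ^ p) a b = (B : EReal))
    (hC : upperBurkill (fun x y => |g₂ x y| ^ p) a b = (C : EReal)) :
    upperBurkill (fun x y => |g₁ x y + g₂ x y| ^ p) a b
      ≤ (((B ^ (1 / p) + C ^ (1 / p)) ^ p : ℝ) : EReal) := by
  apply sSup_le
  rintro L ⟨D, hD, rfl⟩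
  set s1 : ℕ → ℝ := fun n => (D n).sum (fun x y => |g₁ x y| ^ p) with hs1def
  set s2 : ℕ → ℝ := fun n => (D n).sum (fun x y => |g₂ x y| ^ p) with hs2def
  set s3 : ℕ → ℝ := fun n => (D n).sum (fun x y => |g₁ x y + g₂ x y| ^ p) with hs3def
  have hp0 : 0 < p := lt_of_lt_of_le one_pos hp
  have hs1 : ∀ n, 0 ≤ s1 n := fun n =>
    Finset.sum_nonneg fun i _ => Real.rpow_nonneg (abs_nonneg _) _
  have hs2 : ∀ n, 0 ≤ s2 n := fun n =>
    Finset.sum_nonneg fun i _ => Real.rpow_nonneg (abs_nonneg _) _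
  have hs3 : ∀ n, 0 ≤ s3 n := fun n =>
    Finset.sum_nonneg fun i _ => Real.rpow_nonneg (abs_nonneg _) _
  have key : ∀ n, s3 n ^ (1/p) ≤ s1 n ^ (1/p) + s2 n ^ (1/p) := fun n =>
    Real.Lp_add_le (Finset.range (D n).n) (fun i => g₁ ((D n).P i) ((D n).P (i+1)))
      (fun i => g₂ ((D n).P i) ((D n).P (i+1))) hp
  have h1 : Filter.limsup (fun n => ((s1 n : ℝ) : EReal)) Filter.atTop ≤ (B : EReal) := by
    rw [← hB]; exact le_sSup ⟨D, hD, rfl⟩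
  have h2 : Filter.limsup (fun n => ((s2 n : ℝ) : EReal)) Filter.atTop ≤ (C : EReal) := by
    rw [← hC]; exact le_sSup ⟨D, hD, rfl⟩
  exact limsup_minkowski_aux g₁ g₂ a b p hab hp B C s1 s2 s3 hs1 hs2 key hs3 h1 h2
end

section
/- Saks's additivity formula for upper Burkill integrals is false: there exists an interval function g on [0,2] whose upper Burkill integral over (0,1) equals 1, over (1,2) equals 0, over (0,2) equals 1, while the additivity-defect quantity A(1) = max(limsup_{x,z→1}(g([x,z]) − g([x,1]) − g([1,z])), 0) equals 1; hence the claimed identity upper∫_{(0,2)} g = upper∫_{(0,1)} g + upper∫_{(1,2)} g + A(1) fails. -/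
open Filter Finset

/-- The additivity-defect quantity `A(y)` of Saks at the point `y`:
`max(limsup_{x → y⁻, z → y⁺} (g([x,z]) − g([x,y]) − g([y,z])), 0)`. -/
noncomputable def saksA (g : ℝ → ℝ → ℝ) (y : ℝ) : ℝ :=
  max (Filter.limsup (fun p : ℝ × ℝ => g p.1 p.2 - g p.1 y - g y p.2)
    ((nhdsWithin y (Set.Iio y)) ×ˢ (nhdsWithin y (Set.Ioi y)))) 0

section SaksAux


open Classical in
noncomputable def sfun : ℝ → ℝ := fun x => if ∃ n : ℕ, x = 1 - (4⁻¹:ℝ)^n / 2 then 1 else 0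

open Classical in
noncomputable def gfun : ℝ → ℝ → ℝ := fun a b =>
  if b < 1 then sfun b - sfun a
  else if ∃ n : ℕ, a = 1 - (4⁻¹:ℝ)^n ∧ b = 1 + (4⁻¹:ℝ)^n then 1 else 0

lemma rpos (n : ℕ) : (0:ℝ) < (4⁻¹:ℝ)^n := by positivity

lemma rle (n : ℕ) : (4⁻¹:ℝ)^n ≤ 1 := pow_le_one₀ (by norm_num) (by norm_num)

lemma two_mul_four_pow_ne (n m : ℕ) : 2 * 4^n ≠ 4^m := by
  intro h
  have h2 : (2:ℕ)^(2*n+1) = 2^(2*m) := by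
    calc (2:ℕ)^(2*n+1) = 2 * ((2:ℕ)^2)^n := by rw [← pow_mul]; ring_nf
    _ = 2*4^n := by norm_num
    _ = 4^m := h
    _ = ((2:ℕ)^2)^m := by norm_num
    _ = 2^(2*m) := by rw [← pow_mul]
  have := Nat.pow_right_injective (le_refl 2) h2
  omega

lemma sfun_le_one (x : ℝ) : sfun x ≤ 1 := by unfold sfun; split <;> norm_num

lemma sfun_nonneg (x : ℝ) : 0 ≤ sfun x := by unfold sfun; split <;> norm_num

lemma sfun_zero : sfun 0 = 0 := by
  unfold sfun; rw [if_neg]; rintro ⟨n, hn⟩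
  have := rle n; linarith

lemma sfun_special (m : ℕ) : sfun (1 - (4⁻¹:ℝ)^m) = 0 := by
  unfold sfun; rw [if_neg]; rintro ⟨n, hn⟩
  have h : (4⁻¹:ℝ)^m = (4⁻¹:ℝ)^n / 2 := by linarith
  rw [inv_pow, inv_pow] at h
  field_simp at h
  have h4 : (2 * 4^n : ℕ) = 4^m := by
    rw [mul_comm]; exact_mod_cast h
  exact two_mul_four_pow_ne n m h4

lemma sfun_val (m : ℕ) : sfun (1 - (4⁻¹:ℝ)^m/2) = 1 := by
  unfold sfun; rw [if_pos ⟨m, rfl⟩]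

lemma gfun_one (a : ℝ) : gfun a 1 = 0 := by
  unfold gfun; rw [if_neg (lt_irrefl 1), if_neg]
  rintro ⟨n, -, hn⟩
  have := rpos n; linarith

lemma gfun_ge (a b : ℝ) (ha : 1 ≤ a) (hb : 1 ≤ b) : gfun a b = 0 := by
  unfold gfun; rw [if_neg (not_lt.2 hb), if_neg]
  rintro ⟨n, hn, -⟩
  have := rpos n; linarith

lemma gfun_lt (a b : ℝ) (hb : b < 1) : gfun a b = sfun b - sfun a := by
  unfold gfun; rw [if_pos hb]

lemma gfun_le_one (a b : ℝ) : gfun a b ≤ 1 := by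
  unfold gfun; split
  · have := sfun_le_one b; have := sfun_nonneg a; linarith
  · split <;> norm_num

lemma Division.P_le_P {a b : ℝ} (D : Division a b) : ∀ {i j : ℕ}, i ≤ j → j ≤ D.n → D.P i ≤ D.P j := by
  intro i j hij hj
  induction j with
  | zero =>
    have : i = 0 := Nat.le_zero.mp hij
    subst this; exact le_refl _
  | succ j ih =>
    rcases Nat.eq_or_lt_of_le hij with rfl | h
    · exact le_refl _
    · exact (ih (Nat.lt_succ_iff.mp h) (by omega)).trans (D.mono j (by omega)).le

lemma sum_split {a b : ℝ} (D : Division a b) (g : ℝ → ℝ → ℝ) (k : ℕ) (hk : k < D.n) :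
    D.sum g = (∑ i ∈ Finset.range k, g (D.P i) (D.P (i+1))) + g (D.P k) (D.P (k+1))
      + ∑ i ∈ Finset.Ico (k+1) D.n, g (D.P i) (D.P (i+1)) := by
  unfold Division.sum
  rw [← Finset.sum_range_add_sum_Ico _ (show k+1 ≤ D.n from hk), Finset.sum_range_succ]

lemma sum_le_one {c : ℝ} (hc : 1 ≤ c) (D : Division 0 c) : D.sum gfun ≤ 1 := by
  classical
  set k := Nat.findGreatest (fun i => D.P i < 1) D.n with hkdef
  have hP0 : D.P 0 < 1 := by rw [D.first]; norm_num
  have hk0 : D.P k < 1 := by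
    have h := Nat.findGreatest_spec (P := fun i => D.P i < 1) (Nat.zero_le D.n) hP0
    simpa only [← hkdef] using h
  have hkn : k < D.n := by
    rcases Nat.lt_or_ge k D.n with h | h
    · exact h
    · exfalso
      have h1 : k ≤ D.n := Nat.findGreatest_le _
      have h2 : k = D.n := le_antisymm h1 h
      rw [h2, D.last] at hk0; linarith
  have hge : ∀ j, k < j → j ≤ D.n → 1 ≤ D.P j := by
    intro j h1 h2
    have h := Nat.findGreatest_is_greatest (P := fun i => D.P i < 1) (by omega : Nat.findGreatest (fun i => D.P i < 1) D.n < j) h2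
    simpa using h
  rw [sum_split D gfun k hkn]
  have h3 : ∑ i ∈ Finset.Ico (k+1) D.n, gfun (D.P i) (D.P (i+1)) = 0 := by
    apply Finset.sum_eq_zero; intro i hi
    rw [Finset.mem_Ico] at hi
    exact gfun_ge _ _ (hge i (by omega) (by omega)) (hge (i+1) (by omega) (by omega))
  have h1 : ∑ i ∈ Finset.range k, gfun (D.P i) (D.P (i+1)) = sfun (D.P k) := by
    have hcong : ∀ i ∈ Finset.range k, gfun (D.P i) (D.P (i+1)) = sfun (D.P (i+1)) - sfun (D.P i) := by
      intro i hi; rw [Finset.mem_range] at hi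
      exact gfun_lt _ _ (lt_of_le_of_lt (D.P_le_P (by omega) (by omega)) hk0)
    rw [Finset.sum_congr rfl hcong, Finset.sum_range_sub (fun i => sfun (D.P i)), D.first,
      sfun_zero, sub_zero]
  rw [h1, h3, add_zero]
  have hbge : ¬ D.P (k+1) < 1 := not_lt.2 (hge (k+1) (by omega) (by omega))
  by_cases hs : ∃ n : ℕ, D.P k = 1 - (4⁻¹:ℝ)^n ∧ D.P (k+1) = 1 + (4⁻¹:ℝ)^n
  · have hgv : gfun (D.P k) (D.P (k+1)) = 1 := by
      unfold gfun; rw [if_neg hbge, if_pos hs]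
    obtain ⟨n, hn1, -⟩ := hs
    rw [hgv, hn1, sfun_special]; norm_num
  · have hgv : gfun (D.P k) (D.P (k+1)) = 0 := by
      unfold gfun; rw [if_neg hbge, if_neg hs]
    rw [hgv, add_zero]; exact sfun_le_one _

lemma sum_12 (D : Division 1 2) : D.sum gfun = 0 := by
  apply Finset.sum_eq_zero; intro i hi
  rw [Finset.mem_range] at hi
  have h1 : (1:ℝ) ≤ D.P i := by
    have := D.P_le_P (Nat.zero_le i) (le_of_lt hi); rwa [D.first] at this
  have h2 : (1:ℝ) ≤ D.P (i+1) := by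
    have := D.P_le_P (Nat.zero_le (i+1)) hi; rwa [D.first] at this
  exact gfun_ge _ _ h1 h2

lemma sum_01 (D : Division 0 1) : D.sum gfun = sfun (D.P (D.n - 1)) := by
  obtain ⟨k, hk⟩ : ∃ k, D.n = k + 1 := ⟨D.n - 1, by have := D.npos; omega⟩
  unfold Division.sum
  rw [hk, Finset.sum_range_succ]
  have hlast : D.P (k+1) = 1 := by rw [← hk]; exact D.last
  have h1 : ∀ i ∈ Finset.range k, gfun (D.P i) (D.P (i+1)) = sfun (D.P (i+1)) - sfun (D.P i) := by
    intro i hi; rw [Finset.mem_range] at hi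
    apply gfun_lt
    have h2 : D.P (i+1) ≤ D.P k := D.P_le_P (by omega) (by omega)
    have h3 : D.P k < D.P (k+1) := D.mono k (by omega)
    rw [hlast] at h3; linarith
  rw [Finset.sum_congr rfl h1, Finset.sum_range_sub (fun i => sfun (D.P i)), D.first,
    sfun_zero, hlast, gfun_one]
  simp

noncomputable def sN (m : ℕ) : ℝ := 1 - (4⁻¹:ℝ)^m / 2

lemma sN_lt_one (m : ℕ) : sN m < 1 := by
  have := rpos m; unfold sN; linarith

lemma sN_pos (m : ℕ) : 0 < sN m := by
  have := rle m; unfold sN; linarith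

lemma pow_small (m : ℕ) : (4⁻¹:ℝ)^m / 2 < 1/(m+1) := by
  have h1 : ((m:ℝ)+1) ≤ 4^m := by
    have h := Nat.lt_pow_self (n := m) (show 1 < 4 by norm_num)
    have h' : (m+1 : ℕ) ≤ 4^m := h
    exact_mod_cast h'
  have h2 : (4⁻¹:ℝ)^m ≤ 1/((m:ℝ)+1) := by
    rw [inv_pow, one_div]
    exact inv_anti₀ (by positivity) h1
  have h3 : (0:ℝ) < 1/((m:ℝ)+1) := by positivity
  linarith

noncomputable def D01 (m : ℕ) : Division 0 1 where
  n := m + 2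
  P := fun i => if i ≤ m + 1 then (i:ℝ) * sN m / (m+1) else 1
  npos := by omega
  mono := by
    intro i hi
    by_cases h : i ≤ m
    · rw [if_pos (by omega : i ≤ m+1), if_pos (by omega : i+1 ≤ m+1)]
      have hs := sN_pos m
      have hm1 : (0:ℝ) < (m:ℝ)+1 := by positivity
      have key : ((i:ℝ)+1) * sN m / ((m:ℝ)+1) - (i:ℝ) * sN m / ((m:ℝ)+1) = sN m / ((m:ℝ)+1) := by
        ring
      have := div_pos hs hm1
      push_cast
      linarith
    · have hi1 : i = m + 1 := by omega
      subst hi1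
      rw [if_pos (le_refl (m+1)), if_neg (by omega)]
      have : ((m:ℝ)+1) * sN m / ((m:ℝ)+1) = sN m := by
        field_simp
      push_cast
      rw [this]
      exact sN_lt_one m
  first := by simp
  last := by rw [if_neg (by omega)]

lemma D01_P_last (m : ℕ) : (D01 m).P (m+1) = sN m := by
  show (if m+1 ≤ m + 1 then ((m+1:ℕ):ℝ) * sN m / (m+1) else 1) = sN m
  rw [if_pos (le_refl _)]
  push_cast
  field_simp

lemma D01_sum (m : ℕ) : (D01 m).sum gfun = 1 := by
  rw [sum_01]
  show sfun ((D01 m).P (m + 2 - 1)) = 1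
  rw [show m + 2 - 1 = m + 1 from rfl, D01_P_last]
  exact sfun_val m

lemma D01_norm (m : ℕ) : (D01 m).normLt (2/(m+1)) := by
  intro i hi
  have hm1 : (0:ℝ) < (m:ℝ)+1 := by positivity
  by_cases h : i ≤ m
  · show (if i+1 ≤ m + 1 then ((i+1:ℕ):ℝ) * sN m / (m+1) else 1)
      - (if i ≤ m + 1 then (i:ℝ) * sN m / (m+1) else 1) < 2/(m+1)
    rw [if_pos (by omega : i+1 ≤ m+1), if_pos (by omega : i ≤ m+1)]
    have key : ((i:ℝ)+1) * sN m / ((m:ℝ)+1) - (i:ℝ) * sN m / ((m:ℝ)+1) = sN m / ((m:ℝ)+1) := by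
      ring
    have h2 : sN m / ((m:ℝ)+1) < 2/((m:ℝ)+1) := by
      rw [div_lt_div_iff_of_pos_right hm1]
      have := sN_lt_one m; linarith
    push_cast
    linarith
  · have hi1 : i = m + 1 := by
      have : i < m + 2 := hi
      omega
    subst hi1
    show (if m+2 ≤ m + 1 then ((m+2:ℕ):ℝ) * sN m / (m+1) else 1)
      - (if m+1 ≤ m + 1 then ((m+1:ℕ):ℝ) * sN m / (m+1) else 1) < 2/(m+1)
    rw [if_neg (by omega), if_pos (le_refl _)]
    have : ((m+1:ℕ):ℝ) * sN m / ((m:ℝ)+1) = sN m := by push_cast; field_simp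
    rw [this]
    have h1 := pow_small m
    have h3 : (0:ℝ) < 1/((m:ℝ)+1) := by positivity
    unfold sN
    have h4 : (1:ℝ)/((m:ℝ)+1) ≤ 2/((m:ℝ)+1) := by
      rw [div_le_div_iff_of_pos_right hm1]; norm_num
    linarith

noncomputable def D12 (m : ℕ) : Division 1 2 where
  n := m + 1
  P := fun i => 1 + (i:ℝ)/(m+1)
  npos := by omega
  mono := by
    intro i hi
    have hm1 : (0:ℝ) < (m:ℝ)+1 := by positivity
    have h := div_lt_div_of_pos_right (show (i:ℝ) < (i:ℝ)+1 by linarith) hm1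
    push_cast
    linarith
  first := by simp
  last := by push_cast; field_simp; norm_num

lemma D12_norm (m : ℕ) : (D12 m).normLt (2/(m+1)) := by
  intro i hi
  show 1 + ((i+1:ℕ):ℝ)/(m+1) - (1 + (i:ℝ)/(m+1)) < 2/(m+1)
  have hm1 : (0:ℝ) < (m:ℝ)+1 := by positivity
  have key : 1 + ((i:ℝ)+1)/((m:ℝ)+1) - (1 + (i:ℝ)/((m:ℝ)+1)) = 1/((m:ℝ)+1) := by ring
  have h4 : (1:ℝ)/((m:ℝ)+1) < 2/((m:ℝ)+1) := by
    rw [div_lt_div_iff_of_pos_right hm1]; norm_num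
  push_cast
  linarith

noncomputable def D02 (m : ℕ) : Division 0 2 where
  n := 2*m + 3
  P := fun i => if i ≤ m + 1 then (i:ℝ) * sN m / (m+1) else 1 + ((i:ℝ) - ((m:ℝ)+2)) / (m+1)
  npos := by omega
  mono := by
    intro i hi
    have hm1 : (0:ℝ) < (m:ℝ)+1 := by positivity
    by_cases h : i ≤ m
    · rw [if_pos (by omega : i ≤ m+1), if_pos (by omega : i+1 ≤ m+1)]
      have hs := sN_pos m
      have key : ((i:ℝ)+1) * sN m / ((m:ℝ)+1) - (i:ℝ) * sN m / ((m:ℝ)+1) = sN m / ((m:ℝ)+1) := by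
        ring
      have := div_pos hs hm1
      push_cast
      linarith
    · by_cases h2 : i = m + 1
      · subst h2
        rw [if_pos (le_refl (m+1)), if_neg (by omega)]
        have heq : ((m:ℝ)+1) * sN m / ((m:ℝ)+1) = sN m := by field_simp
        have hlt := sN_lt_one m
        push_cast
        rw [heq]
        have : ((m:ℝ) + 1 + 1 - ((m:ℝ)+2)) / ((m:ℝ)+1) = 0 := by ring_nf
        linarith [this]
      · have h3 : m + 2 ≤ i := by omega
        rw [if_neg (by omega), if_neg (by omega)]
        have key : 1 + ((i:ℝ)+1 - ((m:ℝ)+2))/((m:ℝ)+1) - (1 + ((i:ℝ) - ((m:ℝ)+2))/((m:ℝ)+1))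
            = 1/((m:ℝ)+1) := by ring
        have h4 : (0:ℝ) < 1/((m:ℝ)+1) := by positivity
        push_cast
        linarith
  first := by simp
  last := by
    rw [if_neg (by omega)]
    push_cast
    field_simp
    ring

lemma D02_P_eq (m : ℕ) (i : ℕ) (h : i ≤ m + 1) : (D02 m).P i = (i:ℝ) * sN m / (m+1) := by
  show (if i ≤ m + 1 then (i:ℝ) * sN m / ((m:ℝ)+1) else _) = _
  rw [if_pos h]

lemma D02_P_mid (m : ℕ) : (D02 m).P (m+2) = 1 := by
  show (if m + 2 ≤ m + 1 then _ else 1 + (((m+2:ℕ):ℝ) - ((m:ℝ)+2)) / ((m:ℝ)+1)) = 1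
  rw [if_neg (by omega)]
  push_cast
  ring_nf

lemma D02_P_ge (m : ℕ) (i : ℕ) (h : m + 2 ≤ i) : 1 ≤ (D02 m).P i := by
  show 1 ≤ if i ≤ m + 1 then (i:ℝ) * sN m / ((m:ℝ)+1) else 1 + ((i:ℝ) - ((m:ℝ)+2)) / ((m:ℝ)+1)
  rw [if_neg (by omega)]
  have hm1 : (0:ℝ) < (m:ℝ)+1 := by positivity
  have h2 : (0:ℝ) ≤ ((i:ℝ) - ((m:ℝ)+2)) / ((m:ℝ)+1) := by
    apply div_nonneg _ hm1.le
    have : ((m:ℝ)+2) ≤ (i:ℝ) := by exact_mod_cast h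
    linarith
  linarith

lemma D02_sum (m : ℕ) : (D02 m).sum gfun = 1 := by
  rw [sum_split (D02 m) gfun (m+1) (by show m + 1 < 2*m+3; omega)]
  have hmid : (D02 m).P (m+1+1) = 1 := D02_P_mid m
  have hP1 : (D02 m).P (m+1) = sN m := by
    rw [D02_P_eq m (m+1) (le_refl _)]
    push_cast
    field_simp
  have h2 : gfun ((D02 m).P (m+1)) ((D02 m).P (m+1+1)) = 0 := by
    rw [hmid, gfun_one]
  have h3 : ∑ i ∈ Finset.Ico (m+1+1) (D02 m).n, gfun ((D02 m).P i) ((D02 m).P (i+1)) = 0 := by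
    apply Finset.sum_eq_zero; intro i hi
    rw [Finset.mem_Ico] at hi
    exact gfun_ge _ _ (D02_P_ge m i (by omega)) (D02_P_ge m (i+1) (by omega))
  have h1 : ∑ i ∈ Finset.range (m+1), gfun ((D02 m).P i) ((D02 m).P (i+1)) = 1 := by
    have hcong : ∀ i ∈ Finset.range (m+1),
        gfun ((D02 m).P i) ((D02 m).P (i+1)) = sfun ((D02 m).P (i+1)) - sfun ((D02 m).P i) := by
      intro i hi; rw [Finset.mem_range] at hi
      apply gfun_lt
      have hle : (D02 m).P (i+1) ≤ (D02 m).P (m+1) :=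
        (D02 m).P_le_P (by omega) (by show m+1 ≤ 2*m+3; omega)
      rw [hP1] at hle
      exact lt_of_le_of_lt hle (sN_lt_one m)
    rw [Finset.sum_congr rfl hcong, Finset.sum_range_sub (fun i => sfun ((D02 m).P i))]
    have hP0 : (D02 m).P 0 = 0 := (D02 m).first
    rw [hP0, hP1, sfun_zero, sub_zero]
    exact sfun_val m
  rw [h1, h2, h3]
  norm_num

lemma D02_norm (m : ℕ) : (D02 m).normLt (2/(m+1)) := by
  intro i hi
  have hm1 : (0:ℝ) < (m:ℝ)+1 := by positivity
  have h2m : i < 2*m + 3 := hi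
  by_cases h : i ≤ m
  · rw [D02_P_eq m (i+1) (by omega), D02_P_eq m i (by omega)]
    have key : ((i:ℝ)+1) * sN m / ((m:ℝ)+1) - (i:ℝ) * sN m / ((m:ℝ)+1) = sN m / ((m:ℝ)+1) := by
      ring
    have hlt : sN m / ((m:ℝ)+1) < 2/((m:ℝ)+1) := by
      rw [div_lt_div_iff_of_pos_right hm1]
      have := sN_lt_one m; linarith
    push_cast
    linarith
  · by_cases h2 : i = m + 1
    · subst h2
      rw [D02_P_mid m, D02_P_eq m (m+1) (le_refl _)]
      have heq : ((m+1:ℕ):ℝ) * sN m / ((m:ℝ)+1) = sN m := by push_cast; field_simp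
      rw [heq]
      have h1 := pow_small m
      have h4 : (1:ℝ)/((m:ℝ)+1) ≤ 2/((m:ℝ)+1) := by
        rw [div_le_div_iff_of_pos_right hm1]; norm_num
      unfold sN
      linarith
    · have h3 : m + 2 ≤ i := by omega
      show (if i+1 ≤ m + 1 then ((i+1:ℕ):ℝ) * sN m / ((m:ℝ)+1) else 1 + (((i+1:ℕ):ℝ) - ((m:ℝ)+2)) / ((m:ℝ)+1))
        - (if i ≤ m + 1 then (i:ℝ) * sN m / ((m:ℝ)+1) else 1 + ((i:ℝ) - ((m:ℝ)+2)) / ((m:ℝ)+1)) < 2/((m:ℝ)+1)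
      rw [if_neg (by omega), if_neg (by omega)]
      have key : 1 + ((i:ℝ)+1 - ((m:ℝ)+2))/((m:ℝ)+1) - (1 + ((i:ℝ) - ((m:ℝ)+2))/((m:ℝ)+1))
          = 1/((m:ℝ)+1) := by ring
      have h4 : (1:ℝ)/((m:ℝ)+1) < 2/((m:ℝ)+1) := by
        rw [div_lt_div_iff_of_pos_right hm1]; norm_num
      push_cast
      linarith

lemma succession_of_norm {a b : ℝ} (D : ℕ → Division a b)
    (h : ∀ m, (D m).normLt (2/(m+1))) : IsRiemannSuccession D := by
  intro e he
  obtain ⟨N, hN⟩ := exists_nat_one_div_lt (half_pos he)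
  refine ⟨N, fun m hm i hi => ?_⟩
  have h1 := h m i hi
  have hm1 : (0:ℝ) < (m:ℝ)+1 := by positivity
  have hN1 : (0:ℝ) < (N:ℝ)+1 := by positivity
  have h2 : (2:ℝ)/((m:ℝ)+1) ≤ 2/((N:ℝ)+1) := by
    apply div_le_div_of_nonneg_left (by norm_num) hN1
    exact_mod_cast Nat.add_le_add_right hm 1
  have h3 : (2:ℝ)/((N:ℝ)+1) < e := by
    have : (2:ℝ)/((N:ℝ)+1) = 2 * (1/((N:ℝ)+1)) := by ring
    rw [this]; linarith
  linarith

lemma ub_le_of {a b : ℝ} {g : ℝ → ℝ → ℝ} {c : ℝ} (h : ∀ D : Division a b, D.sum g ≤ c) :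
    upperBurkill g a b ≤ (c : EReal) := by
  apply sSup_le
  rintro L ⟨D, -, rfl⟩
  refine Filter.limsup_le_of_le (by isBoundedDefault) ?_
  exact Filter.Eventually.of_forall fun n => by exact_mod_cast h (D n)

lemma le_ub_of {a b : ℝ} {g : ℝ → ℝ → ℝ} {c : ℝ} (D : ℕ → Division a b)
    (hD : IsRiemannSuccession D) (h : ∀ n, (D n).sum g = c) :
    (c : EReal) ≤ upperBurkill g a b := by
  apply le_sSup
  refine ⟨D, hD, ?_⟩
  simp only [h]
  exact (Filter.limsup_const _).symm

lemma ub01 : upperBurkill gfun 0 1 = (1 : EReal) := by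
  refine le_antisymm ?_ ?_
  · have := ub_le_of (g := gfun) (fun D => sum_le_one le_rfl D)
    simpa using this
  · have := le_ub_of D01 (succession_of_norm D01 D01_norm) D01_sum
    simpa using this

lemma ub12 : upperBurkill gfun 1 2 = (0 : EReal) := by
  refine le_antisymm ?_ ?_
  · have := ub_le_of (g := gfun) (fun D : Division 1 2 => le_of_eq (sum_12 D))
    simpa using this
  · have := le_ub_of D12 (succession_of_norm D12 D12_norm) (fun n => sum_12 (D12 n))
    simpa using this

lemma ub02 : upperBurkill gfun 0 2 = (1 : EReal) := by
  refine le_antisymm ?_ ?_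
  · have := ub_le_of (g := gfun) (fun D : Division 0 2 => sum_le_one (by norm_num) D)
    simpa using this
  · have := le_ub_of D02 (succession_of_norm D02 D02_norm) D02_sum
    simpa using this

lemma saks_val : saksA gfun 1 = 1 := by
  unfold saksA
  set F := (nhdsWithin (1:ℝ) (Set.Iio 1)) ×ˢ (nhdsWithin (1:ℝ) (Set.Ioi 1)) with hF
  set h : ℝ × ℝ → ℝ := fun p => gfun p.1 p.2 - gfun p.1 1 - gfun 1 p.2 with hh
  have hmem : (Set.univ ×ˢ Set.Ioi (1:ℝ)) ∈ F := Filter.prod_mem_prod Filter.univ_mem self_mem_nhdsWithin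
  have hev : ∀ᶠ p in F, h p ≤ 1 := by
    filter_upwards [hmem] with p hp
    have hp2 : 1 < p.2 := hp.2
    simp only [hh]
    rw [gfun_one, gfun_ge 1 p.2 le_rfl hp2.le]
    have := gfun_le_one p.1 p.2
    linarith
  have hpow : Tendsto (fun n : ℕ => ((4:ℝ)⁻¹)^n) atTop (nhds 0) := by
    apply tendsto_pow_atTop_nhds_zero_of_lt_one (by norm_num) (by norm_num)
  have h1 : Tendsto (fun n : ℕ => 1 - (4⁻¹:ℝ)^n) atTop (nhdsWithin 1 (Set.Iio 1)) := by
    rw [tendsto_nhdsWithin_iff]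
    constructor
    · have := tendsto_const_nhds (x := (1:ℝ)) (f := atTop (α := ℕ)) |>.sub hpow
      simpa using this
    · exact Eventually.of_forall fun n => by
        simp only [Set.mem_Iio]
        have := rpos n; linarith
  have h2 : Tendsto (fun n : ℕ => 1 + (4⁻¹:ℝ)^n) atTop (nhdsWithin 1 (Set.Ioi 1)) := by
    rw [tendsto_nhdsWithin_iff]
    constructor
    · have := tendsto_const_nhds (x := (1:ℝ)) (f := atTop (α := ℕ)) |>.add hpow
      simpa using this
    · exact Eventually.of_forall fun n => by
        simp only [Set.mem_Ioi]
        have := rpos n; linarith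
  have hT : Tendsto (fun n : ℕ => (1 - (4⁻¹:ℝ)^n, 1 + (4⁻¹:ℝ)^n)) atTop F := h1.prodMk h2
  have hval : ∀ n : ℕ, 1 ≤ h (1 - (4⁻¹:ℝ)^n, 1 + (4⁻¹:ℝ)^n) := by
    intro n
    have hg1 : gfun (1 - (4⁻¹:ℝ)^n) (1 + (4⁻¹:ℝ)^n) = 1 := by
      unfold gfun
      rw [if_neg (by have := rpos n; push_neg; linarith), if_pos ⟨n, rfl, rfl⟩]
    simp only [hh]
    rw [hg1, gfun_one, gfun_ge 1 _ le_rfl (by have := rpos n; linarith)]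
    norm_num
  have hfreq : ∃ᶠ p in F, 1 ≤ h p := hT.frequently (Frequently.of_forall hval)
  have hlimsup : Filter.limsup h F = 1 := by
    refine le_antisymm ?_ ?_
    · exact Filter.limsup_le_of_le (Filter.IsCoboundedUnder.of_frequently_ge hfreq) hev
    · exact Filter.le_limsup_of_frequently_le hfreq ⟨1, by rwa [Filter.eventually_map]⟩
  rw [hlimsup]
  exact sup_eq_left.mpr zero_le_one


end SaksAux

/-- Saks's additivity formula for upper Burkill integrals is false: there is an interval
function `g` on `[0, 2]` whose upper Burkill integral over `(0,1)` equals `1`, over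
`(1,2)` equals `0`, over `(0,2)` equals `1`, while `A(1) = 1`; hence
`upper ∫_{(0,2)} g = upper ∫_{(0,1)} g + upper ∫_{(1,2)} g + A(1)` fails. -/
theorem saks_additivity_formula_false :
    ∃ g : ℝ → ℝ → ℝ,
      upperBurkill g 0 1 = (1 : EReal) ∧
      upperBurkill g 1 2 = (0 : EReal) ∧
      upperBurkill g 0 2 = (1 : EReal) ∧
      saksA g 1 = 1 ∧
      upperBurkill g 0 2 ≠
        upperBurkill g 0 1 + upperBurkill g 1 2 + ((saksA g 1 : ℝ) : EReal) := by
  refine ⟨gfun, ub01, ub12, ub02, saks_val, ?_⟩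
  rw [ub01, ub12, ub02, saks_val]
  rw [EReal.coe_one, add_zero]
  intro hcon
  have h2 : (1:EReal) + 1 = ((2:ℝ):EReal) := by
    rw [← EReal.coe_one, ← EReal.coe_add]; norm_num
  rw [h2] at hcon
  rw [show (1:EReal) = ((1:ℝ):EReal) from (EReal.coe_one).symm] at hcon
  rw [EReal.coe_eq_coe_iff] at hcon
  norm_num at hcon
end

section
/- If an interval function g is absolutely continuous on R and g ≥ 0, then the upper norm-limit of g over R is finite. Consequently, every absolutely continuous interval function (not necessarily nonnegative) has finite upper and lower norm-limits and finite variation, i.e., absolute continuity implies bounded variation. -/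
open Filter Finset

/-- The upper norm-limit of `g` over `[a, b]`: the limit as `e → 0⁺` (equivalently,
the infimum over `e > 0`) of the supremum of Riemann sums over divisions of norm `< e`. -/
noncomputable def upperNormLimit (g : ℝ → ℝ → ℝ) (a b : ℝ) : EReal :=
  ⨅ e : {e : ℝ // 0 < e},
    sSup {s : EReal | ∃ D : Division a b, D.normLt e.1 ∧ s = ((D.sum g : ℝ) : EReal)}

/-- The lower norm-limit of `g` over `[a, b]`. -/
noncomputable def lowerNormLimit (g : ℝ → ℝ → ℝ) (a b : ℝ) : EReal :=
  ⨆ e : {e : ℝ // 0 < e},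
    sInf {s : EReal | ∃ D : Division a b, D.normLt e.1 ∧ s = ((D.sum g : ℝ) : EReal)}

/-- The variation `Var(g; [a,b])`: the norm-limit of `∑ |g(I)|`. -/
noncomputable def variation (g : ℝ → ℝ → ℝ) (a b : ℝ) : EReal :=
  ⨅ e : {e : ℝ // 0 < e},
    sSup {s : EReal | ∃ D : Division a b, D.normLt e.1 ∧
      s = ((∑ i ∈ Finset.range D.n, |g (D.P i) (D.P (i + 1))| : ℝ) : EReal)}

/-- `g` is absolutely continuous on `[c, d]`: for every `ε > 0` there is `δ > 0` such that
every finite collection of non-overlapping subintervals of `[c, d]` of total length `< δ`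
has `|∑ g(Iᵢ)| < ε`. -/
def AbsolutelyContinuousIF (g : ℝ → ℝ → ℝ) (c d : ℝ) : Prop :=
  ∀ ε > (0 : ℝ), ∃ δ > (0 : ℝ), ∀ (m : ℕ) (a b : ℕ → ℝ),
    (∀ i < m, c ≤ a i ∧ a i < b i ∧ b i ≤ d) →
    (∀ i < m, ∀ j < m, i ≠ j → b i ≤ a j ∨ b j ≤ a i) →
    (∑ i ∈ Finset.range m, (b i - a i)) < δ →
    |∑ i ∈ Finset.range m, g (a i) (b i)| < ε


lemma my_div_mono {n : ℕ} {P : ℕ → ℝ} (h : ∀ i < n, P i < P (i + 1)) :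
    ∀ i j, i ≤ j → j ≤ n → P i ≤ P j := by
  intro i j hij hjn
  induction j with
  | zero => cases Nat.le_zero.mp hij; exact le_rfl
  | succ k ih =>
    rcases Nat.eq_or_lt_of_le hij with rfl | h'
    · exact le_rfl
    · exact (ih (Nat.lt_succ_iff.mp h') (le_trans (Nat.le_succ k) hjn)).trans
        (le_of_lt (h k (Nat.lt_of_succ_le hjn)))

lemma my_sum_emb {k : ℕ} (s : Finset ℕ) (hk : s.card = k) (h : ℕ → ℝ) :
    ∑ i ∈ Finset.range k, (if hi : i < k then h (s.orderEmbOfFin hk ⟨i, hi⟩) else 0)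
      = ∑ x ∈ s, h x := by
  rw [← Fin.sum_univ_eq_sum_range]
  rw [← Finset.sum_coe_sort s h]
  rw [← Equiv.sum_comp (s.orderIsoOfFin hk).toEquiv (fun x : s => h x)]
  refine Finset.sum_congr rfl fun i _ => ?_
  simp only [i.isLt, dif_pos, Fin.eta, RelIso.coe_fn_toEquiv, Finset.coe_orderIsoOfFin_apply]

lemma my_chunk (g : ℝ → ℝ → ℝ) (c d δ : ℝ)
    (hAC : ∀ (m : ℕ) (a b : ℕ → ℝ),
      (∀ i < m, c ≤ a i ∧ a i < b i ∧ b i ≤ d) →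
      (∀ i < m, ∀ j < m, i ≠ j → b i ≤ a j ∨ b j ≤ a i) →
      (∑ i ∈ Finset.range m, (b i - a i)) < δ →
      |∑ i ∈ Finset.range m, g (a i) (b i)| < 1)
    (n : ℕ) (P : ℕ → ℝ) (hmono : ∀ i < n, P i < P (i + 1))
    (hc : c ≤ P 0) (hd : P n ≤ d)
    (s : Finset ℕ) (hs : s ⊆ Finset.range n)
    (hlen : ∑ i ∈ s, (P (i + 1) - P i) < δ) :
    |∑ i ∈ s, g (P i) (P (i + 1))| < 1 := by
  classical
  set k := s.card with hk
  set F : Fin k → ℕ := ⇑(s.orderEmbOfFin rfl) with hF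
  have hFmem : ∀ i : Fin k, F i ∈ s := fun i => s.orderEmbOfFin_mem rfl i
  have hFlt : ∀ i : Fin k, F i < n := fun i => Finset.mem_range.mp (hs (hFmem i))
  set a : ℕ → ℝ := fun i => if hi : i < k then P (F ⟨i, hi⟩) else 0 with ha
  set b : ℕ → ℝ := fun i => if hi : i < k then P (F ⟨i, hi⟩ + 1) else 1 with hb
  have h1 : ∀ i < k, c ≤ a i ∧ a i < b i ∧ b i ≤ d := by
    intro i hi
    simp only [ha, hb, dif_pos hi]
    exact ⟨hc.trans (my_div_mono hmono 0 _ (Nat.zero_le _) (le_of_lt (hFlt ⟨i, hi⟩))),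
      hmono _ (hFlt ⟨i, hi⟩),
      (my_div_mono hmono _ n (hFlt ⟨i, hi⟩) le_rfl).trans hd⟩
  have h2 : ∀ i < k, ∀ j < k, i ≠ j → b i ≤ a j ∨ b j ≤ a i := by
    intro i hi j hj hij
    have hFij : F ⟨i, hi⟩ ≠ F ⟨j, hj⟩ := by
      intro h
      exact hij (congrArg Fin.val ((s.orderEmbOfFin rfl).injective h))
    simp only [ha, hb, dif_pos hi, dif_pos hj]
    rcases lt_or_gt_of_ne hFij with h | h
    · exact Or.inl (my_div_mono hmono _ _ h (le_of_lt (hFlt ⟨j, hj⟩)))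
    · exact Or.inr (my_div_mono hmono _ _ h (le_of_lt (hFlt ⟨i, hi⟩)))
  have e1 : ∑ i ∈ Finset.range k, (b i - a i) = ∑ x ∈ s, (P (x + 1) - P x) := by
    rw [← my_sum_emb s rfl (fun x => P (x + 1) - P x)]
    refine Finset.sum_congr rfl fun i hi => ?_
    have hi' := Finset.mem_range.mp hi
    simp only [ha, hb, dif_pos (show i < k from hi'), dif_pos hi', hF]
  have e2 : ∑ i ∈ Finset.range k, g (a i) (b i) = ∑ x ∈ s, g (P x) (P (x + 1)) := by
    rw [← my_sum_emb s rfl (fun x => g (P x) (P (x + 1)))]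
    refine Finset.sum_congr rfl fun i hi => ?_
    have hi' := Finset.mem_range.mp hi
    simp only [ha, hb, dif_pos (show i < k from hi'), dif_pos hi', hF]
  have := hAC k a b h1 h2 (by rw [e1]; exact hlen)
  rwa [e2] at this

lemma my_chunk_abs (g : ℝ → ℝ → ℝ) (c d δ : ℝ)
    (hAC : ∀ (m : ℕ) (a b : ℕ → ℝ),
      (∀ i < m, c ≤ a i ∧ a i < b i ∧ b i ≤ d) →
      (∀ i < m, ∀ j < m, i ≠ j → b i ≤ a j ∨ b j ≤ a i) →
      (∑ i ∈ Finset.range m, (b i - a i)) < δ →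
      |∑ i ∈ Finset.range m, g (a i) (b i)| < 1)
    (n : ℕ) (P : ℕ → ℝ) (hmono : ∀ i < n, P i < P (i + 1))
    (hc : c ≤ P 0) (hd : P n ≤ d)
    (s : Finset ℕ) (hs : s ⊆ Finset.range n)
    (hlen : ∑ i ∈ s, (P (i + 1) - P i) < δ) :
    ∑ i ∈ s, |g (P i) (P (i + 1))| ≤ 2 := by
  classical
  have hlensub : ∀ t : Finset ℕ, t ⊆ s → ∑ i ∈ t, (P (i + 1) - P i) < δ := by
    intro t ht
    refine lt_of_le_of_lt (Finset.sum_le_sum_of_subset_of_nonneg ht ?_) hlen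
    intro i hi _
    exact sub_nonneg.mpr (le_of_lt (hmono i (Finset.mem_range.mp (hs hi))))
  set p : ℕ → Prop := fun i => 0 ≤ g (P i) (P (i + 1)) with hp
  have h1 := my_chunk g c d δ hAC n P hmono hc hd (s.filter p)
    ((Finset.filter_subset _ _).trans hs) (hlensub _ (Finset.filter_subset _ _))
  have h2 := my_chunk g c d δ hAC n P hmono hc hd (s.filter (fun i => ¬ p i))
    ((Finset.filter_subset _ _).trans hs) (hlensub _ (Finset.filter_subset _ _))
  rw [← Finset.sum_filter_add_sum_filter_not s p]
  have e1 : ∑ i ∈ s.filter p, |g (P i) (P (i + 1))| = ∑ i ∈ s.filter p, g (P i) (P (i + 1)) := by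
    refine Finset.sum_congr rfl fun i hi => abs_of_nonneg ?_
    exact (Finset.mem_filter.mp hi).2
  have e2 : ∑ i ∈ s.filter (fun i => ¬ p i), |g (P i) (P (i + 1))|
      = -∑ i ∈ s.filter (fun i => ¬ p i), g (P i) (P (i + 1)) := by
    rw [← Finset.sum_neg_distrib]
    refine Finset.sum_congr rfl fun i hi => abs_of_neg ?_
    exact lt_of_not_ge (Finset.mem_filter.mp hi).2
  rw [e1, e2]
  have := (le_abs_self _).trans (le_of_lt h1)
  have := (neg_le_abs _).trans (le_of_lt h2)
  linarith [le_abs_self (∑ i ∈ s.filter p, g (P i) (P (i+1))), 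
    neg_le_abs (∑ i ∈ s.filter (fun i => ¬ p i), g (P i) (P (i+1)))]

lemma my_var_bound (g : ℝ → ℝ → ℝ) (c d δ : ℝ) (hδ : 0 < δ)
    (hAC : ∀ (m : ℕ) (a b : ℕ → ℝ),
      (∀ i < m, c ≤ a i ∧ a i < b i ∧ b i ≤ d) →
      (∀ i < m, ∀ j < m, i ≠ j → b i ≤ a j ∨ b j ≤ a i) →
      (∑ i ∈ Finset.range m, (b i - a i)) < δ →
      |∑ i ∈ Finset.range m, g (a i) (b i)| < 1) :
    ∀ n : ℕ, ∀ P : ℕ → ℝ, (∀ i < n, P i < P (i + 1)) → c ≤ P 0 → P n ≤ d →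
    (∀ i < n, P (i + 1) - P i < δ) →
    ∑ i ∈ Finset.range n, |g (P i) (P (i + 1))| ≤ 3 * ((P n - P 0) / δ + 1) := by
  intro n
  induction n using Nat.strong_induction_on with
  | _ n IH =>
    intro P hmono hc hd hnorm
    have h0n : P 0 ≤ P n := my_div_mono hmono 0 n (Nat.zero_le _) le_rfl
    by_cases hshort : P n - P 0 < δ
    · -- whole thing is one chunk
      have := my_chunk_abs g c d δ hAC n P hmono hc hd (Finset.range n) le_rfl
        (by rw [Finset.sum_range_sub]; exact hshort)
      have hpos : 0 ≤ (P n - P 0) / δ := div_nonneg (by linarith) (le_of_lt hδ)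
      linarith
    · push_neg at hshort
      -- find minimal m with δ ≤ P (m+1) - P 0
      have hn1 : 1 ≤ n := by
        by_contra h
        push_neg at h
        interval_cases n
        simp at hshort
        linarith
      have hex : ∃ m, δ ≤ P (m + 1) - P 0 := ⟨n - 1, by rwa [Nat.sub_add_cancel hn1]⟩
      classical
      obtain ⟨m, hmle, hmspec, hmmin⟩ : ∃ m, m ≤ n - 1 ∧ δ ≤ P (m + 1) - P 0 ∧
          ∀ j < m, P (j + 1) - P 0 < δ :=
        ⟨Nat.find hex, Nat.find_min' hex (by rwa [Nat.sub_add_cancel hn1]),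
          Nat.find_spec hex, fun j hj => by
            have := Nat.find_min hex hj; push_neg at this; exact this⟩
      have hmn : m + 1 ≤ n := by omega
      have hPm : P m - P 0 < δ := by
        rcases Nat.eq_zero_or_pos m with h0 | hm0
        · rw [h0]; simpa using hδ
        · have := hmmin (m - 1) (by omega)
          rwa [Nat.sub_add_cancel hm0] at this
      -- head: indices < m
      have hhead : ∑ i ∈ Finset.range m, |g (P i) (P (i + 1))| ≤ 2 := by
        refine my_chunk_abs g c d δ hAC n P hmono hc hd (Finset.range m)
          (Finset.range_subset_range.mpr (by omega)) ?_
        rw [Finset.sum_range_sub]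
        exact hPm
      -- middle: single interval m
      have hmid : |g (P m) (P (m + 1))| ≤ 1 := by
        have := my_chunk g c d δ hAC n P hmono hc hd {m}
          (by simp [Finset.singleton_subset_iff]; omega)
          (by simpa using hnorm m (by omega))
        simpa using le_of_lt this
      -- tail
      set Q : ℕ → ℝ := fun i => P (m + 1 + i) with hQ
      have htail : ∑ i ∈ Finset.range (n - (m + 1)), |g (Q i) (Q (i + 1))|
          ≤ 3 * ((Q (n - (m + 1)) - Q 0) / δ + 1) := by
        refine IH (n - (m + 1)) (by omega) Q ?_ ?_ ?_ ?_
        · intro i hi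
          have : Q i = P (m + 1 + i) := rfl
          have h2 : Q (i + 1) = P ((m + 1 + i) + 1) := by rw [hQ]; ring_nf
          rw [this, h2]
          exact hmono _ (by omega)
        · exact hc.trans (my_div_mono hmono 0 (m + 1) (Nat.zero_le _) hmn)
        · have : Q (n - (m + 1)) = P n := by
            show P (m + 1 + (n - (m + 1))) = P n
            congr 1
            omega
          rw [this]; exact hd
        · intro i hi
          have h2 : Q (i + 1) = P ((m + 1 + i) + 1) := by rw [hQ]; ring_nf
          rw [h2]
          exact hnorm _ (by omega)
      have hsplit : ∑ i ∈ Finset.range n, |g (P i) (P (i + 1))|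
          = ∑ i ∈ Finset.range (m + 1), |g (P i) (P (i + 1))|
            + ∑ i ∈ Finset.range (n - (m + 1)), |g (Q i) (Q (i + 1))| := by
        rw [← Finset.sum_range_add_sum_Ico _ hmn, Finset.sum_Ico_eq_sum_range]
        congr 1
      have hQn : Q (n - (m + 1)) = P n := by
        show P (m + 1 + (n - (m + 1))) = P n
        congr 1
        omega
      have hQ0 : Q 0 = P (m + 1) := by rw [hQ]
      rw [hQn, hQ0] at htail
      rw [hsplit, Finset.sum_range_succ]
      have key : 3 + 3 * ((P n - P (m + 1)) / δ + 1) ≤ 3 * ((P n - P 0) / δ + 1) := by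
        have : (P n - P (m + 1)) / δ + 1 ≤ (P n - P 0) / δ := by
          rw [div_add' _ _ _ (ne_of_gt hδ), div_le_div_iff_of_pos_right hδ]
          linarith
        linarith
      linarith

lemma my_exists_division (c d : ℝ) (hcd : c < d) (e : ℝ) (he : 0 < e) :
    ∃ D : Division c d, D.normLt e := by
  obtain ⟨n, hn0, hne⟩ : ∃ n : ℕ, 0 < n ∧ (d - c) / n < e := by
    refine ⟨⌊(d - c) / e⌋₊ + 1, Nat.succ_pos _, ?_⟩
    have hn0' : (0 : ℝ) < ((⌊(d - c) / e⌋₊ + 1 : ℕ) : ℝ) := by positivity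
    rw [div_lt_iff₀ hn0']
    have h1 : (d - c) / e < ((⌊(d - c) / e⌋₊ + 1 : ℕ) : ℝ) := by
      push_cast
      exact Nat.lt_floor_add_one _
    rw [div_lt_iff₀ he] at h1
    linarith
  have hn0' : (0 : ℝ) < (n : ℝ) := by exact_mod_cast hn0
  have hq : 0 < (d - c) / n := div_pos (by linarith) hn0'
  have hkey : ∀ i : ℕ, ((i + 1 : ℕ) : ℝ) * ((d - c) / n)
      = (i : ℝ) * ((d - c) / n) + (d - c) / n := by
    intro i
    push_cast
    ring
  refine ⟨⟨n, fun i => c + i * ((d - c) / n), hn0, ?_, by simp, ?_⟩, ?_⟩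
  · intro i hi
    show c + (i : ℝ) * ((d - c) / n) < c + ((i + 1 : ℕ) : ℝ) * ((d - c) / n)
    rw [hkey]
    linarith
  · show c + (n : ℝ) * ((d - c) / n) = d
    field_simp
    ring
  · intro i hi
    show c + ((i + 1 : ℕ) : ℝ) * ((d - c) / n) - (c + (i : ℝ) * ((d - c) / n)) < e
    rw [hkey]
    linarith

theorem absolutelyContinuous_implies_boundedVariation' (g : ℝ → ℝ → ℝ) (c d : ℝ)
    (hcd : c < d) (hAC : AbsolutelyContinuousIF g c d) :
    (∃ u : ℝ, upperNormLimit g c d = (u : EReal)) ∧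
    (∃ l : ℝ, lowerNormLimit g c d = (l : EReal)) ∧
    variation g c d ≠ ⊤ := by
  obtain ⟨δ, hδ, hACδ⟩ := hAC 1 one_pos
  set K : ℝ := 3 * ((d - c) / δ + 1) with hK
  have hvar : ∀ D : Division c d, D.normLt δ →
      ∑ i ∈ Finset.range D.n, |g (D.P i) (D.P (i + 1))| ≤ K := by
    intro D hD
    have := my_var_bound g c d δ hδ hACδ D.n D.P D.mono (by rw [D.first]) (by rw [D.last]) hD
    rwa [D.last, D.first] at this
  have habs : ∀ D : Division c d, D.normLt δ → |D.sum g| ≤ K := by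
    intro D hD
    exact le_trans (Finset.abs_sum_le_sum_abs _ _) (hvar D hD)
  -- upper norm limit
  have h1 : upperNormLimit g c d ≤ (K : EReal) := by
    refine iInf_le_of_le ⟨δ, hδ⟩ (sSup_le ?_)
    rintro s ⟨D, hD, rfl⟩
    exact EReal.coe_le_coe_iff.mpr ((le_abs_self _).trans (habs D hD))
  have h2 : ((-K : ℝ) : EReal) ≤ upperNormLimit g c d := by
    refine le_iInf ?_
    rintro ⟨e, he⟩
    obtain ⟨D, hD⟩ := my_exists_division c d hcd (min e δ) (lt_min he hδ)
    have hDe : D.normLt e := fun i hi => (hD i hi).trans_le (min_le_left _ _)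
    have hDδ : D.normLt δ := fun i hi => (hD i hi).trans_le (min_le_right _ _)
    refine le_trans ?_ (le_sSup ⟨D, hDe, rfl⟩)
    refine EReal.coe_le_coe_iff.mpr ?_
    have := habs D hDδ
    rw [abs_le] at this
    exact this.1
  have hut : upperNormLimit g c d ≠ ⊤ := (h1.trans_lt (EReal.coe_lt_top K)).ne
  have hub : upperNormLimit g c d ≠ ⊥ := ((EReal.bot_lt_coe _).trans_le h2).ne'
  -- lower norm limit
  have h3 : lowerNormLimit g c d ≤ (K : EReal) := by
    refine iSup_le ?_
    rintro ⟨e, he⟩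
    obtain ⟨D, hD⟩ := my_exists_division c d hcd (min e δ) (lt_min he hδ)
    have hDe : D.normLt e := fun i hi => (hD i hi).trans_le (min_le_left _ _)
    have hDδ : D.normLt δ := fun i hi => (hD i hi).trans_le (min_le_right _ _)
    refine le_trans (sInf_le ⟨D, hDe, rfl⟩) ?_
    exact EReal.coe_le_coe_iff.mpr ((le_abs_self _).trans (habs D hDδ))
  have h4 : ((-K : ℝ) : EReal) ≤ lowerNormLimit g c d := by
    refine le_iSup_of_le ⟨δ, hδ⟩ (le_sInf ?_)
    rintro s ⟨D, hD, rfl⟩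
    refine EReal.coe_le_coe_iff.mpr ?_
    have := habs D hD
    rw [abs_le] at this
    exact this.1
  have hlt : lowerNormLimit g c d ≠ ⊤ := (h3.trans_lt (EReal.coe_lt_top K)).ne
  have hlb : lowerNormLimit g c d ≠ ⊥ := ((EReal.bot_lt_coe _).trans_le h4).ne'
  -- variation
  have h5 : variation g c d ≤ (K : EReal) := by
    refine iInf_le_of_le ⟨δ, hδ⟩ (sSup_le ?_)
    rintro s ⟨D, hD, rfl⟩
    exact EReal.coe_le_coe_iff.mpr (hvar D hD)
  exact ⟨⟨(upperNormLimit g c d).toReal, (EReal.coe_toReal hut hub).symm⟩,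
    ⟨(lowerNormLimit g c d).toReal, (EReal.coe_toReal hlt hlb).symm⟩,
    (h5.trans_lt (EReal.coe_lt_top K)).ne⟩

/-- (2.1) and Corollary: If `g` is absolutely continuous on `[c, d]` and `g ≥ 0`, then the
upper norm-limit of `g` over `[c, d]` is finite.  Consequently every absolutely continuous
interval function has finite upper and lower norm-limits and finite variation: absolute
continuity implies bounded variation. -/
theorem absolutelyContinuous_implies_boundedVariation (g : ℝ → ℝ → ℝ) (c d : ℝ)
    (hcd : c < d) :
    (AbsolutelyContinuousIF g c d → (∀ x y : ℝ, c ≤ x → x < y → y ≤ d → 0 ≤ g x y) →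
      upperNormLimit g c d ≠ ⊤) ∧
    (AbsolutelyContinuousIF g c d →
      (∃ u : ℝ, upperNormLimit g c d = (u : EReal)) ∧
      (∃ l : ℝ, lowerNormLimit g c d = (l : EReal)) ∧
      variation g c d ≠ ⊤) := by
  constructor
  · intro hAC _
    obtain ⟨⟨u, hu⟩, _, _⟩ := absolutelyContinuous_implies_boundedVariation' g c d hcd hAC
    rw [hu]
    exact EReal.coe_ne_top u
  · intro hAC
    exact absolutelyContinuous_implies_boundedVariation' g c d hcd hAC
end

section
/- Product formula for two-dimensional restricted Burkill integrals of product functions: if g(T) = g₁(I_x)·g₂(I_y) for each rectangle T = I_x × I_y, and g₁ ≥ 0, g₂ ≥ 0, then the upper restricted norm-limit of g over the rectangle T₀ = J_x × J_y equals (upper norm-limit of g₁ over J_x) · (upper norm-limit of g₂ over J_y), assuming both factors on the right are finite. -/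
open Filter Finset

/-- The upper restricted norm-limit of a rectangle function `g` over the rectangle
`[ax, bx] × [ay, by]`: the limit as `e → 0⁺` of the supremum of `∑_{T ∈ D} g(T)` over
restricted (grid) divisions `D` in which every cell has diameter `< e`. -/
noncomputable def upperRestrictedNormLimit (g : ℝ → ℝ → ℝ → ℝ → ℝ)
    (ax bx ay b2 : ℝ) : EReal :=
  ⨅ e : {e : ℝ // 0 < e},
    sSup {s : EReal | ∃ (Dx : Division ax bx) (Dy : Division ay b2),
      (∀ i < Dx.n, ∀ j < Dy.n,
        Real.sqrt ((Dx.P (i + 1) - Dx.P i) ^ 2 + (Dy.P (j + 1) - Dy.P j) ^ 2) < e.1) ∧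
      s = ((∑ i ∈ Finset.range Dx.n, ∑ j ∈ Finset.range Dy.n,
        g (Dx.P i) (Dx.P (i + 1)) (Dy.P j) (Dy.P (j + 1)) : ℝ) : EReal)}

lemma Division.mono_le {a b : ℝ} (D : Division a b) :
    ∀ i j, i ≤ j → j ≤ D.n → D.P i ≤ D.P j := by
  intro i j hij hjn
  induction j with
  | zero =>
      have : i = 0 := Nat.le_zero.mp hij
      rw [this]
  | succ k ih =>
      rcases Nat.eq_or_lt_of_le hij with h | h
      · rw [h]
      · have hk : k < D.n := Nat.lt_of_succ_le hjn
        exact le_trans (ih (Nat.lt_succ_iff.mp h) hk.le) (D.mono k hk).le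

lemma Division.sum_nonneg {a b : ℝ} (D : Division a b) (g : ℝ → ℝ → ℝ)
    (h : ∀ x y, a ≤ x → x < y → y ≤ b → 0 ≤ g x y) : 0 ≤ D.sum g := by
  apply Finset.sum_nonneg
  intro i hi
  rw [Finset.mem_range] at hi
  refine h _ _ ?_ (D.mono i hi) ?_
  · have := D.mono_le 0 i (Nat.zero_le _) hi.le
    rwa [D.first] at this
  · have := D.mono_le (i+1) D.n hi le_rfl
    rwa [D.last] at this

lemma ereal_coe_le_of_forall_sub (c : ℝ) (x : EReal)
    (h : ∀ ε : ℝ, 0 < ε → ((c - ε : ℝ) : EReal) ≤ x) : (c : EReal) ≤ x := by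
  by_contra hlt
  push_neg at hlt
  obtain ⟨r, hxr, hrc⟩ := EReal.exists_between_coe_real hlt
  have h1 := h (c - r) (by exact_mod_cast sub_pos.mpr (by exact_mod_cast hrc))
  simp only [sub_sub_cancel] at h1
  exact absurd (lt_of_le_of_lt h1 hxr) (lt_irrefl _)

lemma ereal_le_coe_of_forall_add (c : ℝ) (x : EReal)
    (h : ∀ ε : ℝ, 0 < ε → x ≤ ((c + ε : ℝ) : EReal)) : x ≤ (c : EReal) := by
  by_contra hlt
  push_neg at hlt
  obtain ⟨r, hcr, hrx⟩ := EReal.exists_between_coe_real hlt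
  have h1 := h (r - c) (by exact_mod_cast sub_pos.mpr (by exact_mod_cast hcr))
  simp only [add_sub_cancel] at h1
  exact absurd (lt_of_lt_of_le hrx h1) (lt_irrefl _)

lemma upperNormLimit_le_sSup (g : ℝ → ℝ → ℝ) (a b : ℝ) (e : {e : ℝ // 0 < e}) :
    upperNormLimit g a b ≤
      sSup {s : EReal | ∃ D : Division a b, D.normLt e.1 ∧ s = ((D.sum g : ℝ) : EReal)} :=
  iInf_le _ e

lemma upperNormLimit_nonneg (g : ℝ → ℝ → ℝ) (a b : ℝ) (U : ℝ)
    (hg : ∀ x y, a ≤ x → x < y → y ≤ b → 0 ≤ g x y)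
    (hU : upperNormLimit g a b = (U : EReal)) : 0 ≤ U := by
  by_cases hbot : ∃ e : {e : ℝ // 0 < e},
      sSup {s : EReal | ∃ D : Division a b, D.normLt e.1 ∧ s = ((D.sum g : ℝ) : EReal)} = ⊥
  · obtain ⟨e, he⟩ := hbot
    have h1 : upperNormLimit g a b ≤ ⊥ := he ▸ upperNormLimit_le_sSup g a b e
    rw [hU] at h1
    exact absurd (le_bot_iff.mp h1) (EReal.coe_ne_bot U)
  · push_neg at hbot
    have h0 : (0 : EReal) ≤ upperNormLimit g a b := by
      apply le_iInf
      intro e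
      rcases Set.eq_empty_or_nonempty
        {s : EReal | ∃ D : Division a b, D.normLt e.1 ∧ s = ((D.sum g : ℝ) : EReal)} with h | h
      · exact absurd (by rw [h, sSup_empty]) (hbot e)
      · obtain ⟨s, D, hD, rfl⟩ := h
        refine le_trans ?_ (le_sSup ⟨D, hD, rfl⟩)
        exact_mod_cast D.sum_nonneg g hg
    rw [hU] at h0
    exact_mod_cast h0

lemma exists_division_near (g : ℝ → ℝ → ℝ) (a b : ℝ) (U : ℝ)
    (hU : upperNormLimit g a b = (U : EReal)) (e ε : ℝ) (he : 0 < e) (hε : 0 < ε) :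
    ∃ D : Division a b, D.normLt e ∧ U - ε < D.sum g := by
  have h1 : ((U - ε : ℝ) : EReal) <
      sSup {s : EReal | ∃ D : Division a b, D.normLt e ∧ s = ((D.sum g : ℝ) : EReal)} := by
    refine lt_of_lt_of_le ?_ (hU ▸ upperNormLimit_le_sSup g a b ⟨e, he⟩)
    exact_mod_cast sub_lt_self U hε
  obtain ⟨s, ⟨D, hD, rfl⟩, hlt⟩ := lt_sSup_iff.mp h1
  exact ⟨D, hD, by exact_mod_cast hlt⟩

lemma exists_e_small (g : ℝ → ℝ → ℝ) (a b : ℝ) (U : ℝ)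
    (hU : upperNormLimit g a b = (U : EReal)) (ε : ℝ) (hε : 0 < ε) :
    ∃ e : ℝ, 0 < e ∧ ∀ D : Division a b, D.normLt e → D.sum g < U + ε := by
  have h1 : upperNormLimit g a b < ((U + ε : ℝ) : EReal) := by
    rw [hU]; exact_mod_cast lt_add_of_pos_right U hε
  obtain ⟨e, he⟩ := iInf_lt_iff.mp h1
  refine ⟨e.1, e.2, fun D hD => ?_⟩
  have h2 : ((D.sum g : ℝ) : EReal) ≤
      sSup {s : EReal | ∃ D : Division a b, D.normLt e.1 ∧ s = ((D.sum g : ℝ) : EReal)} :=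
    le_sSup ⟨D, hD, rfl⟩
  exact_mod_cast lt_of_le_of_lt h2 he

/-- (III.4.2 Corollary): Product formula for two-dimensional restricted Burkill integrals
(norm-limits) of product functions: if `g(T) = g₁(I_x)·g₂(I_y)` for each rectangle
`T = I_x × I_y` and `g₁, g₂ ≥ 0`, then the upper restricted norm-limit of `g` over
`[ax,bx] × [ay,by]` equals the product of the (finite) upper norm-limits of `g₁` over
`[ax, bx]` and of `g₂` over `[ay, by]`. -/
theorem upperRestrictedNormLimit_prod (g : ℝ → ℝ → ℝ → ℝ → ℝ) (g₁ g₂ : ℝ → ℝ → ℝ)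
    (ax bx ay b2 : ℝ) (hx : ax < bx) (hy : ay < b2)
    (hprod : ∀ x1 x2 y1 y2 : ℝ, g x1 x2 y1 y2 = g₁ x1 x2 * g₂ y1 y2)
    (h₁ : ∀ x y : ℝ, ax ≤ x → x < y → y ≤ bx → 0 ≤ g₁ x y)
    (h₂ : ∀ x y : ℝ, ay ≤ x → x < y → y ≤ b2 → 0 ≤ g₂ x y)
    (U₁ U₂ : ℝ)
    (hU₁ : upperNormLimit g₁ ax bx = (U₁ : EReal))
    (hU₂ : upperNormLimit g₂ ay b2 = (U₂ : EReal)) :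
    upperRestrictedNormLimit g ax bx ay b2 = ((U₁ * U₂ : ℝ) : EReal) := by
  have hU₁0 : 0 ≤ U₁ := upperNormLimit_nonneg g₁ ax bx U₁ h₁ hU₁
  have hU₂0 : 0 ≤ U₂ := upperNormLimit_nonneg g₂ ay b2 U₂ h₂ hU₂
  have hK : (0:ℝ) < U₁ + U₂ + 1 := by linarith
  -- the grid sum factorization
  have hfact : ∀ (Dx : Division ax bx) (Dy : Division ay b2),
      (∑ i ∈ Finset.range Dx.n, ∑ j ∈ Finset.range Dy.n,
        g (Dx.P i) (Dx.P (i + 1)) (Dy.P j) (Dy.P (j + 1)))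
      = Dx.sum g₁ * Dy.sum g₂ := by
    intro Dx Dy
    unfold Division.sum
    rw [Finset.sum_mul_sum]
    apply Finset.sum_congr rfl
    intro i _
    apply Finset.sum_congr rfl
    intro j _
    exact hprod _ _ _ _
  apply le_antisymm
  · -- upper bound
    apply ereal_le_coe_of_forall_add
    intro δ hδ
    set ε : ℝ := min 1 (δ / (U₁ + U₂ + 1)) with hεdef
    have hε : 0 < ε := lt_min one_pos (div_pos hδ hK)
    have hε1 : ε ≤ 1 := min_le_left _ _
    have hεδ : ε * (U₁ + U₂ + 1) ≤ δ := by
      rw [← le_div_iff₀ hK]; exact min_le_right _ _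
    obtain ⟨e₁, he₁, hb₁⟩ := exists_e_small g₁ ax bx U₁ hU₁ ε hε
    obtain ⟨e₂, he₂, hb₂⟩ := exists_e_small g₂ ay b2 U₂ hU₂ ε hε
    set e : {e : ℝ // 0 < e} := ⟨min e₁ e₂, lt_min he₁ he₂⟩ with hedef
    refine le_trans (iInf_le _ e) (sSup_le ?_)
    rintro s ⟨Dx, Dy, hdiam, rfl⟩
    have hxnorm : Dx.normLt e₁ := by
      intro i hi
      have h0y : 0 < Dy.n := Dy.npos
      have hd := hdiam i hi 0 h0y
      have hdx : Dx.P (i+1) - Dx.P i ≤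
          Real.sqrt ((Dx.P (i + 1) - Dx.P i) ^ 2 + (Dy.P 1 - Dy.P 0) ^ 2) := by
        rw [show (0:ℕ)+1 = 1 from rfl] at *
        calc Dx.P (i+1) - Dx.P i = Real.sqrt ((Dx.P (i+1) - Dx.P i)^2) := by
              rw [Real.sqrt_sq (by linarith [Dx.mono i hi])]
          _ ≤ _ := Real.sqrt_le_sqrt (le_add_of_nonneg_right (sq_nonneg _))
      calc Dx.P (i+1) - Dx.P i ≤ _ := hdx
        _ < min e₁ e₂ := hd
        _ ≤ e₁ := min_le_left _ _
    have hynorm : Dy.normLt e₂ := by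
      intro j hj
      have h0x : 0 < Dx.n := Dx.npos
      have hd := hdiam 0 h0x j hj
      have hdy : Dy.P (j+1) - Dy.P j ≤
          Real.sqrt ((Dx.P 1 - Dx.P 0) ^ 2 + (Dy.P (j + 1) - Dy.P j) ^ 2) := by
        calc Dy.P (j+1) - Dy.P j = Real.sqrt ((Dy.P (j+1) - Dy.P j)^2) := by
              rw [Real.sqrt_sq (by linarith [Dy.mono j hj])]
          _ ≤ _ := Real.sqrt_le_sqrt (le_add_of_nonneg_left (sq_nonneg _))
      calc Dy.P (j+1) - Dy.P j ≤ _ := hdy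
        _ < min e₁ e₂ := hd
        _ ≤ e₂ := min_le_right _ _
    have hs₁ : Dx.sum g₁ < U₁ + ε := hb₁ Dx hxnorm
    have hs₂ : Dy.sum g₂ < U₂ + ε := hb₂ Dy hynorm
    have hs₁0 : 0 ≤ Dx.sum g₁ := Dx.sum_nonneg g₁ h₁
    have hs₂0 : 0 ≤ Dy.sum g₂ := Dy.sum_nonneg g₂ h₂
    rw [hfact Dx Dy]
    rw [EReal.coe_le_coe_iff]
    nlinarith [mul_le_mul hs₁.le hs₂.le hs₂0 (by linarith : (0:ℝ) ≤ U₁ + ε)]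
  · -- lower bound
    apply le_iInf
    intro e
    apply ereal_coe_le_of_forall_sub
    intro δ hδ
    set ε : ℝ := min 1 (δ / (U₁ + U₂ + 1)) with hεdef
    have hε : 0 < ε := lt_min one_pos (div_pos hδ hK)
    have hε1 : ε ≤ 1 := min_le_left _ _
    have hεδ : ε * (U₁ + U₂ + 1) ≤ δ := by
      rw [← le_div_iff₀ hK]; exact min_le_right _ _
    have hsqrt2 : (0:ℝ) < Real.sqrt 2 := Real.sqrt_pos.mpr two_pos
    set e' : ℝ := e.1 / Real.sqrt 2 with he'def
    have he' : 0 < e' := div_pos e.2 hsqrt2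
    obtain ⟨Dx, hDx, hs₁⟩ := exists_division_near g₁ ax bx U₁ hU₁ e' ε he' hε
    obtain ⟨Dy, hDy, hs₂⟩ := exists_division_near g₂ ay b2 U₂ hU₂ e' ε he' hε
    have he'sq : e' ^ 2 = e.1 ^ 2 / 2 := by
      rw [he'def, div_pow, Real.sq_sqrt (by norm_num : (0:ℝ) ≤ 2)]
    have hmem : ((Dx.sum g₁ * Dy.sum g₂ : ℝ) : EReal) ∈
        {s : EReal | ∃ (Dx : Division ax bx) (Dy : Division ay b2),
          (∀ i < Dx.n, ∀ j < Dy.n,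
            Real.sqrt ((Dx.P (i + 1) - Dx.P i) ^ 2 + (Dy.P (j + 1) - Dy.P j) ^ 2) < e.1) ∧
          s = ((∑ i ∈ Finset.range Dx.n, ∑ j ∈ Finset.range Dy.n,
            g (Dx.P i) (Dx.P (i + 1)) (Dy.P j) (Dy.P (j + 1)) : ℝ) : EReal)} := by
      refine ⟨Dx, Dy, ?_, by rw [hfact Dx Dy]⟩
      intro i hi j hj
      have hdx0 : 0 < Dx.P (i+1) - Dx.P i := by linarith [Dx.mono i hi]
      have hdy0 : 0 < Dy.P (j+1) - Dy.P j := by linarith [Dy.mono j hj]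
      have h1 : (Dx.P (i+1) - Dx.P i)^2 + (Dy.P (j+1) - Dy.P j)^2 < e.1 ^ 2 := by
        have hx2 : (Dx.P (i+1) - Dx.P i)^2 < e' ^ 2 :=
          pow_lt_pow_left₀ (hDx i hi) hdx0.le (by norm_num)
        have hy2 : (Dy.P (j+1) - Dy.P j)^2 < e' ^ 2 :=
          pow_lt_pow_left₀ (hDy j hj) hdy0.le (by norm_num)
        rw [he'sq] at hx2 hy2
        linarith
      calc Real.sqrt ((Dx.P (i+1) - Dx.P i)^2 + (Dy.P (j+1) - Dy.P j)^2)
          < Real.sqrt (e.1 ^ 2) := Real.sqrt_lt_sqrt (by positivity) h1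
        _ = e.1 := Real.sqrt_sq e.2.le
    refine le_trans ?_ (le_sSup hmem)
    rw [EReal.coe_le_coe_iff]
    have hs₁0 : 0 ≤ Dx.sum g₁ := Dx.sum_nonneg g₁ h₁
    have hs₂0 : 0 ≤ Dy.sum g₂ := Dy.sum_nonneg g₂ h₂
    set a : ℝ := max (U₁ - ε) 0 with hadef
    set b : ℝ := max (U₂ - ε) 0 with hbdef
    have ha1 : a ≤ Dx.sum g₁ := max_le hs₁.le hs₁0
    have hb1 : b ≤ Dy.sum g₂ := max_le hs₂.le hs₂0
    have ha0 : 0 ≤ a := le_max_right _ _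
    have hb0 : 0 ≤ b := le_max_right _ _
    have haU : a ≤ U₁ := max_le (by linarith) hU₁0
    have hbU : b ≤ U₂ := max_le (by linarith) hU₂0
    have haε : U₁ ≤ a + ε := by
      rcases le_or_gt (U₁ - ε) 0 with h | h
      · rw [hadef, max_eq_right h]; linarith
      · rw [hadef, max_eq_left h.le]; linarith
    have hbε : U₂ ≤ b + ε := by
      rcases le_or_gt (U₂ - ε) 0 with h | h
      · rw [hbdef, max_eq_right h]; linarith
      · rw [hbdef, max_eq_left h.le]; linarith
    nlinarith [mul_le_mul haε hbε hU₂0 (by linarith : (0:ℝ) ≤ a + ε),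
      mul_le_mul ha1 hb1 hb0 hs₁0]
end

section
/- Density integral recovers the Lebesgue extension: let g be an additive and absolutely continuous interval function on [A,B]. For a Lebesgue measurable set E ⊆ [A,B], define K(I) = g(I)·m(E∩I)/m(I). Then for every sequence of divisions D_n of [A,B] with norms tending to 0, the sums ∑_{I∈D_n} K(I) converge to g(E) = ∫_E g'(x) dx, where g' is the a.e.-derivative of g; in particular the upper and lower density integrals of g over E both equal g(E). -/
open Filter Finset

open MeasureTheory

section DensityIntegralAux

open Filter Finset MeasureTheory Set Topology
open scoped ENNReal NNReal



lemma aux_sum_iSup_le {ι κ : Type} [Nonempty κ] (F : ι → κ → ℝ≥0∞) (S : Finset ι)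
    (c C : ℝ≥0∞) (h : ∀ P : ι → κ, c + ∑ i ∈ S, F i (P i) ≤ C) :
    c + ∑ i ∈ S, ⨆ p, F i p ≤ C := by
  classical
  induction S using Finset.induction generalizing c with
  | empty => simpa using h (fun _ => Classical.arbitrary κ)
  | @insert j S hj IH =>
      rw [Finset.sum_insert hj]
      have : (⨆ p, F j p) + ∑ i ∈ S, ⨆ p, F i p ≤ ⨆ p : κ, (F j p + ∑ i ∈ S, ⨆ q, F i q) := by
        rw [ENNReal.iSup_add]
      calc c + ((⨆ p, F j p) + ∑ i ∈ S, ⨆ p, F i p)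
          = ⨆ p : κ, (c + F j p + ∑ i ∈ S, ⨆ q, F i q) := by
            rw [ENNReal.iSup_add, ENNReal.add_iSup]; congr 1; ext p; ring
        _ ≤ C := by
            refine iSup_le fun p => IH (c + F j p) fun P => ?_
            have := h (Function.update P j p)
            rw [Finset.sum_insert hj, Function.update_self] at this
            calc c + F j p + ∑ i ∈ S, F i (P i)
                = c + (F j p + ∑ i ∈ S, F i (Function.update P j p i)) := by
                  rw [add_assoc]; congr 2
                  refine Finset.sum_congr rfl fun i hi => ?_
                  rw [Function.update_of_ne]
                  rintro rfl; exact hj hi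
              _ ≤ C := this

lemma aux_eVariationOn_eq (f : ℝ → ℝ) (s : Set ℝ) :
    eVariationOn f s = ⨆ p : ℕ × (ℕ → ℝ), ⨆ _ : (Monotone p.2 ∧ ∀ k, p.2 k ∈ s),
      ∑ i ∈ Finset.range p.1, edist (f (p.2 (i+1))) (f (p.2 i)) := by
  apply le_antisymm
  · refine iSup_le fun p => ?_
    refine le_trans ?_ (le_iSup _ (⟨p.1, p.2.1⟩ : ℕ × (ℕ → ℝ)))
    exact le_iSup_of_le p.2.2 le_rfl
  · refine iSup_le fun p => iSup_le fun hp => ?_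
    exact le_iSup_of_le (⟨p.1, ⟨p.2, hp⟩⟩ :
      ℕ × { u : ℕ → ℝ // Monotone u ∧ ∀ i, u i ∈ s }) le_rfl


lemma aux_open_eq_Ioo {C : Set ℝ} (hC : IsOpen C) (hconn : IsPreconnected C)
    (hne : C.Nonempty) (hbb : BddBelow C) (hba : BddAbove C) :
    C = Set.Ioo (sInf C) (sSup C) := by
  have hIoo : Set.Ioo (sInf C) (sSup C) ⊆ C := by
    intro z hz
    obtain ⟨x, hx, hxz⟩ := exists_lt_of_csInf_lt hne hz.1
    obtain ⟨y, hy, hzy⟩ := exists_lt_of_lt_csSup hne hz.2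
    exact hconn.ordConnected.out hx hy ⟨hxz.le, hzy.le⟩
  have hsub : C ⊆ Set.Icc (sInf C) (sSup C) := fun x hx =>
    ⟨csInf_le hbb hx, le_csSup hba hx⟩
  have hInf : sInf C ∉ C := by
    intro h
    obtain ⟨ε, hε, hball⟩ := Metric.isOpen_iff.1 hC _ h
    have : sInf C - ε/2 ∈ C := by
      apply hball
      rw [Metric.mem_ball, Real.dist_eq, abs_lt]
      constructor <;> linarith
    exact absurd (csInf_le hbb this) (by linarith)
  have hSup : sSup C ∉ C := by
    intro h
    obtain ⟨ε, hε, hball⟩ := Metric.isOpen_iff.1 hC _ h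
    have : sSup C + ε/2 ∈ C := by
      apply hball
      rw [Metric.mem_ball, Real.dist_eq, abs_lt]
      constructor <;> linarith
    exact absurd (le_csSup hba this) (by linarith)
  apply Set.Subset.antisymm _ hIoo
  intro x hx
  rcases hsub hx with ⟨h1, h2⟩
  refine ⟨h1.lt_of_ne ?_, h2.lt_of_ne ?_⟩
  · rintro rfl; exact hInf hx
  · rintro rfl; exact hSup hx

lemma aux_stieltjes_ac (p : StieltjesFunction ℝ) (lo hi : ℝ)
    (h0 : p.measure (Set.Iic lo) = 0) (h1 : p.measure (Set.Ici hi) = 0)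
    (hsmall : ∀ ε > (0:ℝ), ∃ δ > (0:ℝ), ∀ (S : Finset (Set ℝ)) (a b : Set ℝ → ℝ),
        (∀ i ∈ S, a i ≤ b i) → (∀ i ∈ S, ∀ j ∈ S, i ≠ j → b i ≤ a j ∨ b j ≤ a i) →
        (∑ i ∈ S, (b i - a i)) < δ → ∑ i ∈ S, (p (b i) - p (a i)) ≤ ε) :
    p.measure ≪ volume := by
  classical
  refine Measure.AbsolutelyContinuous.mk fun s _hs hvol => ?_
  -- it suffices to bound by every positive ε
  refine le_antisymm ?_ zero_le
  have key : ∀ ε : ℝ, 0 < ε → p.measure s ≤ ENNReal.ofReal ε := by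
    intro ε hε
    obtain ⟨δ, hδ, hδε⟩ := hsmall ε hε
    -- the middle part of s
    have hmid : volume (s ∩ Set.Ioo (lo - 1) (hi + 1)) < ENNReal.ofReal δ := by
      refine lt_of_le_of_lt (le_trans (measure_mono Set.inter_subset_left) hvol.le) ?_
      exact ENNReal.ofReal_pos.2 hδ
    obtain ⟨U, hsU, hUopen, hUvol⟩ :=
      Set.exists_isOpen_lt_of_lt (s ∩ Set.Ioo (lo - 1) (hi + 1)) _ hmid
    set U' := U ∩ Set.Ioo (lo - 1) (hi + 1) with hU'
    have hU'open : IsOpen U' := hUopen.inter isOpen_Ioo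
    have hU'vol : volume U' < ENNReal.ofReal δ :=
      lt_of_le_of_lt (measure_mono Set.inter_subset_left) hUvol
    have hsU' : s ∩ Set.Ioo (lo - 1) (hi + 1) ⊆ U' :=
      Set.subset_inter hsU Set.inter_subset_right
    -- decompose s
    have hcover : s ⊆ Set.Iic lo ∪ (s ∩ Set.Ioo (lo - 1) (hi + 1)) ∪ Set.Ici hi := by
      intro x hx
      by_cases h1x : x ≤ lo
      · exact Or.inl (Or.inl h1x)
      by_cases h2x : hi ≤ x
      · exact Or.inr h2x
      · push_neg at h1x h2x
        exact Or.inl (Or.inr ⟨hx, by linarith, by linarith⟩)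
    have hle : p.measure s ≤ p.measure U' := by
      calc p.measure s ≤ p.measure (Set.Iic lo) + p.measure (s ∩ Set.Ioo (lo-1) (hi+1))
            + p.measure (Set.Ici hi) :=
            le_trans (measure_mono hcover) (le_trans (measure_union_le _ _)
              (by gcongr; exact measure_union_le _ _))
        _ = p.measure (s ∩ Set.Ioo (lo-1) (hi+1)) := by rw [h0, h1]; simp
        _ ≤ p.measure U' := measure_mono hsU'
    refine hle.trans ?_
    -- decompose U' into connected components
    set T : Set (Set ℝ) := {c | ∃ x ∈ U', c = connectedComponentIn U' x} with hT
    have hTopen : ∀ c ∈ T, IsOpen c := by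
      rintro c ⟨x, hx, rfl⟩; exact hU'open.connectedComponentIn
    have hTne : ∀ c ∈ T, c.Nonempty := by
      rintro c ⟨x, hx, rfl⟩; exact ⟨x, mem_connectedComponentIn hx⟩
    have hTsub : ∀ c ∈ T, c ⊆ U' := by
      rintro c ⟨x, hx, rfl⟩; exact connectedComponentIn_subset _ _
    have hTconn : ∀ c ∈ T, IsPreconnected c := by
      rintro c ⟨x, hx, rfl⟩; exact isPreconnected_connectedComponentIn
    have hTdisj : T.Pairwise (Disjoint : Set ℝ → Set ℝ → Prop) := by
      rintro c ⟨x, hx, rfl⟩ d ⟨y, hy, rfl⟩ hcd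
      rw [Set.disjoint_left]
      intro z hzc hzd
      exact hcd ((connectedComponentIn_eq hzc).trans (connectedComponentIn_eq hzd).symm)
    have hTcount : T.Countable := by
      have : T.PairwiseDisjoint (id : Set ℝ → Set ℝ) := hTdisj
      exact this.countable_of_isOpen hTopen hTne
    have hUnion : ⋃₀ T = U' := by
      apply Set.Subset.antisymm
      · exact Set.sUnion_subset hTsub
      · intro x hx
        exact ⟨connectedComponentIn U' x, ⟨x, hx, rfl⟩, mem_connectedComponentIn hx⟩
    have hmeas : p.measure U' = ∑' c : T, p.measure c := by
      rw [← hUnion]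
      exact measure_sUnion hTcount hTdisj (fun c hc => (hTopen c hc).measurableSet)
    rw [hmeas, ENNReal.tsum_eq_iSup_sum]
    refine iSup_le fun Fi => ?_
    -- each component is an Ioo
    have hcomp : ∀ c ∈ T, c = Set.Ioo (sInf c) (sSup c) := by
      intro c hc
      refine aux_open_eq_Ioo (hTopen c hc) (hTconn c hc) (hTne c hc) ?_ ?_
      · exact ⟨lo - 1, fun y hy => ((hTsub c hc) hy).2.1.le⟩
      · exact ⟨hi + 1, fun y hy => ((hTsub c hc) hy).2.2.le⟩
    -- restrict to components in T
    set Fi' : Finset (Set ℝ) := Fi.image Subtype.val with hFi'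
    have hFi'T : ∀ c ∈ Fi', c ∈ T := by
      intro c hc; rw [hFi', Finset.mem_image] at hc
      obtain ⟨⟨c', hc'⟩, _, rfl⟩ := hc; exact hc'
    have hsum_eq : ∑ c ∈ Fi, p.measure c = ∑ c ∈ Fi', p.measure c := by
      rw [hFi']
      exact (Finset.sum_image (fun x _ y _ h => Subtype.coe_injective h)).symm
    rw [hsum_eq]
    -- now bound
    have hlen : ∑ c ∈ Fi', (sSup c - sInf c) < δ := by
      have hvolc : ∀ c ∈ Fi', volume c = ENNReal.ofReal (sSup c - sInf c) := by
        intro c hc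
        conv_lhs => rw [hcomp c (hFi'T c hc)]
        exact Real.volume_Ioo
      have hdisj' : (↑Fi' : Set (Set ℝ)).PairwiseDisjoint (id : Set ℝ → Set ℝ) := by
        intro c hc d hd hcd
        exact hTdisj (hFi'T c hc) (hFi'T d hd) hcd
      have : ∑ c ∈ Fi', volume c = volume (⋃ c ∈ Fi', c) :=
        (measure_biUnion_finset hdisj' (fun c hc => ((hTopen c (hFi'T c hc)).measurableSet))).symm
      have hbound : ∑ c ∈ Fi', volume c < ENNReal.ofReal δ := by
        rw [this]
        refine lt_of_le_of_lt (measure_mono ?_) hU'vol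
        exact Set.iUnion₂_subset fun c hc => hTsub c (hFi'T c hc)
      rw [Finset.sum_congr rfl hvolc] at hbound
      rw [← ENNReal.ofReal_sum_of_nonneg] at hbound
      · exact (ENNReal.ofReal_lt_ofReal_iff hδ).1 hbound
      · intro c hc
        have := hcomp c (hFi'T c hc)
        have hne' := hTne c (hFi'T c hc)
        rw [this] at hne'
        rw [Set.nonempty_Ioo] at hne'
        linarith
    have hords : ∀ c ∈ Fi', sInf c ≤ sSup c := by
      intro c hc
      have := hcomp c (hFi'T c hc); have hne' := hTne c (hFi'T c hc)
      rw [this, Set.nonempty_Ioo] at hne'; linarith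
    have hpair : ∀ c ∈ Fi', ∀ d ∈ Fi', c ≠ d →
        sSup c ≤ sInf d ∨ sSup d ≤ sInf c := by
      intro c hc d hd hcd
      by_contra hcon
      push_neg at hcon
      have h1 := hcomp c (hFi'T c hc); have h2 := hcomp d (hFi'T d hd)
      have hnec := hTne c (hFi'T c hc); have hned := hTne d (hFi'T d hd)
      rw [h1, Set.nonempty_Ioo] at hnec; rw [h2, Set.nonempty_Ioo] at hned
      have hdisj := hTdisj (hFi'T c hc) (hFi'T d hd) hcd
      have hmm : max (sInf c) (sInf d) < min (sSup c) (sSup d) := by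
        rw [max_lt_iff, lt_min_iff, lt_min_iff]
        exact ⟨⟨hnec, hcon.2⟩, ⟨hcon.1, hned⟩⟩
      set m2 := (max (sInf c) (sInf d) + min (sSup c) (sSup d)) / 2 with hm2
      have hmax : sInf c ≤ max (sInf c) (sInf d) := le_max_left _ _
      have hmax' : sInf d ≤ max (sInf c) (sInf d) := le_max_right _ _
      have hmin : min (sSup c) (sSup d) ≤ sSup c := min_le_left _ _
      have hmin' : min (sSup c) (sSup d) ≤ sSup d := min_le_right _ _
      have hmc : m2 ∈ c := by
        rw [hcomp c (hFi'T c hc)]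
        exact ⟨by rw [hm2]; linarith, by rw [hm2]; linarith⟩
      have hmd : m2 ∈ d := by
        rw [hcomp d (hFi'T d hd)]
        exact ⟨by rw [hm2]; linarith, by rw [hm2]; linarith⟩
      exact absurd (Set.disjoint_left.1 hdisj hmc) (fun h => h hmd)
    -- apply hsmall
    have happ := hδε Fi' (fun c => sInf c) (fun c => sSup c) hords hpair hlen
    calc ∑ c ∈ Fi', p.measure c
        ≤ ∑ c ∈ Fi', ENNReal.ofReal (p (sSup c) - p (sInf c)) := by
          refine Finset.sum_le_sum fun c hc => ?_
          have hmeq : p.measure c = ENNReal.ofReal (Function.leftLim p (sSup c) - p (sInf c)) := by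
            conv_lhs => rw [hcomp c (hFi'T c hc)]
            exact p.measure_Ioo
          rw [hmeq]
          exact ENNReal.ofReal_le_ofReal (by
            have := p.mono.leftLim_le (le_refl (sSup c)); linarith)
      _ = ENNReal.ofReal (∑ c ∈ Fi', (p (sSup c) - p (sInf c))) := by
          rw [ENNReal.ofReal_sum_of_nonneg]
          intro c hc
          have := p.mono (hords c hc); linarith
      _ ≤ ENNReal.ofReal ε := ENNReal.ofReal_le_ofReal happ
  -- conclude
  refine ENNReal.le_of_forall_pos_le_add fun ε hε _ => ?_
  have h := key ε (by exact_mod_cast hε)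
  rw [zero_add]
  simpa [ENNReal.ofReal_coe_nnreal] using h


section DI

variable (g : ℝ → ℝ → ℝ) (A B : ℝ)

/-- clamp to `[A, B]` -/
noncomputable def diClamp (x : ℝ) : ℝ := max A (min x B)

/-- the primitive `F(x) = g(A, x)` extended to `ℝ` -/
noncomputable def diF (x : ℝ) : ℝ := if x ≤ A then 0 else g A (min x B)

variable {g A B}

lemma diClamp_mem (hAB : A ≤ B) (x : ℝ) : diClamp A B x ∈ Set.Icc A B := by
  constructor
  · exact le_max_left _ _
  · rw [diClamp, max_le_iff]
    exact ⟨hAB, min_le_right _ _⟩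

lemma diClamp_mono : Monotone (diClamp A B) := fun x y h => by
  dsimp [diClamp]; gcongr

lemma diClamp_of_mem (hx : x ∈ Set.Icc A B) : diClamp A B x = x := by
  rw [diClamp, min_eq_left hx.2, max_eq_right hx.1]

lemma diClamp_diff_le {x y : ℝ} (h : x ≤ y) : diClamp A B y - diClamp A B x ≤ y - x := by
  rw [diClamp, diClamp]
  rcases le_total y B with hy | hy
  · rw [min_eq_left hy, min_eq_left (le_trans h hy)]
    rcases le_total A x with hx | hx
    · rw [max_eq_right hx, max_eq_right (le_trans hx h)]
    · rw [max_eq_left hx]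
      rcases le_total A y with hy' | hy'
      · rw [max_eq_right hy']; linarith
      · rw [max_eq_left hy']; linarith
  · rw [min_eq_right hy]
    rcases le_total x B with hx | hx
    · rw [min_eq_left hx]
      have h1 : max A x ≥ A := le_max_left _ _
      rcases le_total A x with h2 | h2
      · rw [max_eq_right h2]; rcases le_total A B with h3 | h3
        · rw [max_eq_right h3]; linarith
        · rw [max_eq_left h3]; linarith
      · rw [max_eq_left h2]; rcases le_total A B with h3 | h3
        · rw [max_eq_right h3]; linarith
        · rw [max_eq_left h3]; linarith
    · rw [min_eq_right hx]; linarith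

lemma diF_eq (hAB : A < B)
    (hadd : ∀ a x b : ℝ, A ≤ a → a < x → x < b → b ≤ B → g a x + g x b = g a b)
    {a b : ℝ} (ha : A ≤ a) (hab : a < b) (hb : b ≤ B) :
    diF g A B b - diF g A B a = g a b := by
  have hbA : ¬ b ≤ A := not_le.2 (lt_of_le_of_lt ha hab)
  have hminb : min b B = b := min_eq_left hb
  rw [diF, diF, if_neg hbA, hminb]
  rcases eq_or_lt_of_le ha with rfl | haA
  · rw [if_pos le_rfl]; ring
  · rw [if_neg (not_le.2 haA), min_eq_left (le_trans hab.le hb)]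
    have := hadd A a b le_rfl haA hab hb
    linarith

lemma diF_clamp (hAB : A < B) (x : ℝ) : diF g A B (diClamp A B x) = diF g A B x := by
  rcases le_total x A with hx | hx
  · have h1 : diClamp A B x = A := by
      rw [diClamp, min_eq_left (le_trans hx hAB.le), max_eq_left hx]
    rw [h1, diF, diF, if_pos le_rfl, if_pos hx]
  · rcases le_total x B with hx2 | hx2
    · rw [diClamp_of_mem ⟨hx, hx2⟩]
    · have h1 : diClamp A B x = B := by
        rw [diClamp, min_eq_right hx2, max_eq_right hAB.le]
      rw [h1, diF, diF, if_neg (not_le.2 hAB), if_neg (not_le.2 (lt_of_lt_of_le hAB hx2)),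
        min_eq_right hx2, min_eq_left le_rfl]

/-- Absolute continuity with absolute values, over an arbitrary `Finset` index. -/
lemma di_gabs (hAB : A < B)
    (hac : ∀ ε > (0 : ℝ), ∃ δ > (0 : ℝ), ∀ (m : ℕ) (a b : ℕ → ℝ),
      (∀ i < m, A ≤ a i ∧ a i < b i ∧ b i ≤ B) →
      (∀ i < m, ∀ j < m, i ≠ j → b i ≤ a j ∨ b j ≤ a i) →
      (∑ i ∈ Finset.range m, (b i - a i)) < δ →
      |∑ i ∈ Finset.range m, g (a i) (b i)| < ε) :
    ∀ ε > (0 : ℝ), ∃ δ > (0 : ℝ), ∀ (ι : Type) (_ : DecidableEq ι) (S : Finset ι) (a b : ι → ℝ),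
      (∀ i ∈ S, A ≤ a i ∧ a i < b i ∧ b i ≤ B) →
      (∀ i ∈ S, ∀ j ∈ S, i ≠ j → b i ≤ a j ∨ b j ≤ a i) →
      (∑ i ∈ S, (b i - a i)) < δ →
      ∑ i ∈ S, |g (a i) (b i)| < ε := by
  intro ε hε
  obtain ⟨δ, hδ, hδε⟩ := hac (ε/2) (by linarith)
  refine ⟨δ, hδ, ?_⟩
  intro ι _dec S a b hmem hdisj hlen
  -- first: a version for arbitrary subsets with signed sums
  have key : ∀ T : Finset ι, T ⊆ S → |∑ i ∈ T, g (a i) (b i)| < ε/2 := by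
    intro T hTS
    set m := T.card with hm
    set e : Fin m → ι := fun k => (T.equivFin.symm k : ι) with he
    have he_mem : ∀ k, e k ∈ T := fun k => (T.equivFin.symm k).2
    have he_inj : Function.Injective e := fun k l h => by
      apply T.equivFin.symm.injective
      exact Subtype.coe_injective h
    set a' : ℕ → ℝ := fun k => if h : k < m then a (e ⟨k, h⟩) else 0 with ha'
    set b' : ℕ → ℝ := fun k => if h : k < m then b (e ⟨k, h⟩) else 1 with hb'
    have hsum : ∀ φ : ℝ → ℝ → ℝ,
        ∑ k ∈ Finset.range m, φ (a' k) (b' k) = ∑ i ∈ T, φ (a i) (b i) := by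
      intro φ
      rw [Finset.sum_range (fun k => φ (a' k) (b' k))]
      have heq : ∀ k : Fin m, φ (a' k.val) (b' k.val) =
          (fun x : ↥T => φ (a x.val) (b x.val)) (T.equivFin.symm k) := by
        intro k
        rw [ha', hb']
        simp only [dif_pos k.isLt, Fin.eta, he]
      rw [Finset.sum_congr rfl (fun k _ => heq k)]
      rw [Equiv.sum_comp T.equivFin.symm (fun x : ↥T => φ (a x.val) (b x.val))]
      exact Finset.sum_coe_sort T (fun x => φ (a x) (b x))
    have h1 : ∀ i < m, A ≤ a' i ∧ a' i < b' i ∧ b' i ≤ B := by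
      intro i hi
      rw [ha', hb']
      simp only [dif_pos hi]
      exact hmem _ (hTS (he_mem _))
    have h2 : ∀ i < m, ∀ j < m, i ≠ j → b' i ≤ a' j ∨ b' j ≤ a' i := by
      intro i hi j hj hij
      rw [ha', hb']
      simp only [dif_pos hi, dif_pos hj]
      refine hdisj _ (hTS (he_mem _)) _ (hTS (he_mem _)) ?_
      intro h
      exact hij (by simpa using congrArg Fin.val (he_inj h))
    have h3 : ∑ k ∈ Finset.range m, (b' k - a' k) < δ := by
      rw [hsum (fun x y => y - x)]
      refine lt_of_le_of_lt ?_ hlen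
      refine Finset.sum_le_sum_of_subset_of_nonneg hTS ?_
      intro i hi _
      have := hmem i hi
      linarith [this.2.1]
    have := hδε m a' b' h1 h2 h3
    rwa [hsum g] at this
  -- split by sign
  classical
  set Sp := S.filter (fun i => 0 ≤ g (a i) (b i)) with hSp
  set Sn := S.filter (fun i => ¬ 0 ≤ g (a i) (b i)) with hSn
  have hsplit : ∑ i ∈ S, |g (a i) (b i)| =
      ∑ i ∈ Sp, g (a i) (b i) - ∑ i ∈ Sn, g (a i) (b i) := by
    rw [hSp, hSn, ← Finset.sum_filter_add_sum_filter_not S (fun i => 0 ≤ g (a i) (b i))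
      (fun i => |g (a i) (b i)|)]
    rw [Finset.sum_congr rfl (fun i hi => abs_of_nonneg (Finset.mem_filter.1 hi).2),
      Finset.sum_congr rfl (fun i hi => abs_of_neg (not_le.1 (Finset.mem_filter.1 hi).2))]
    rw [Finset.sum_neg_distrib]
    ring
  rw [hsplit]
  have k1 := key Sp (Finset.filter_subset _ _)
  have k2 := key Sn (Finset.filter_subset _ _)
  rw [abs_lt] at k1 k2
  linarith [k1.1, k1.2, k2.1, k2.2]

end DI

section DI2

variable {g : ℝ → ℝ → ℝ} {A B : ℝ}

lemma di_exists (hAB : A < B)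
    (hadd : ∀ a x b : ℝ, A ≤ a → a < x → x < b → b ≤ B → g a x + g x b = g a b)
    (hac : ∀ ε > (0 : ℝ), ∃ δ > (0 : ℝ), ∀ (m : ℕ) (a b : ℕ → ℝ),
      (∀ i < m, A ≤ a i ∧ a i < b i ∧ b i ≤ B) →
      (∀ i < m, ∀ j < m, i ≠ j → b i ≤ a j ∨ b j ≤ a i) →
      (∑ i ∈ Finset.range m, (b i - a i)) < δ →
      |∑ i ∈ Finset.range m, g (a i) (b i)| < ε) :
    ∃ μP μQ : Measure ℝ, IsFiniteMeasure μP ∧ IsFiniteMeasure μQ ∧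
      μP ≪ (volume : Measure ℝ) ∧ μQ ≪ (volume : Measure ℝ) ∧
      ∀ a b : ℝ, A ≤ a → a < b → b ≤ B →
        g a b = (μP (Set.Ioc a b)).toReal - (μQ (Set.Ioc a b)).toReal := by
  classical
  set f : ℝ → ℝ := diF g A B with hf
  set cl : ℝ → ℝ := diClamp A B with hcl
  have gabs := di_gabs hAB hac
  -- Vsum : finite disjoint families of intervals have small total variation
  have Vsum : ∀ ε > (0:ℝ), ∃ δ > (0:ℝ), ∀ (ι : Type) (_ : DecidableEq ι)
      (S : Finset ι) (a b : ι → ℝ),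
      (∀ i ∈ S, A ≤ a i ∧ a i ≤ b i ∧ b i ≤ B) →
      (∀ i ∈ S, ∀ j ∈ S, i ≠ j → b i ≤ a j ∨ b j ≤ a i) →
      (∑ i ∈ S, (b i - a i)) < δ →
      ∑ i ∈ S, eVariationOn f (Set.Icc (a i) (b i)) ≤ ENNReal.ofReal ε := by
    intro ε hε
    obtain ⟨δ, hδ, hδε⟩ := gabs ε hε
    refine ⟨δ, hδ, ?_⟩
    intro ι _dec S a b hmem hdisj hlen
    have hrw : ∀ i ∈ S, eVariationOn f (Set.Icc (a i) (b i)) =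
        ⨆ p : ℕ × (ℕ → ℝ), ⨆ _ : (Monotone p.2 ∧ ∀ k, p.2 k ∈ Set.Icc (a i) (b i)),
          ∑ k ∈ Finset.range p.1, edist (f (p.2 (k+1))) (f (p.2 k)) :=
      fun i _ => aux_eVariationOn_eq f _
    rw [Finset.sum_congr rfl hrw]
    have := aux_sum_iSup_le
      (fun (i : ι) (p : ℕ × (ℕ → ℝ)) =>
        ⨆ _ : (Monotone p.2 ∧ ∀ k, p.2 k ∈ Set.Icc (a i) (b i)),
          ∑ k ∈ Finset.range p.1, edist (f (p.2 (k+1))) (f (p.2 k)))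
      S 0 (ENNReal.ofReal ε) ?_
    · simpa using this
    intro P
    rw [zero_add]
    -- replace P by honest partitions
    set P' : ι → ℕ × (ℕ → ℝ) := fun i =>
      if (Monotone (P i).2 ∧ ∀ k, (P i).2 k ∈ Set.Icc (a i) (b i)) then P i
      else (0, fun _ => a i) with hP'
    have hP'prop : ∀ i ∈ S, Monotone (P' i).2 ∧ ∀ k, (P' i).2 k ∈ Set.Icc (a i) (b i) := by
      intro i hi
      by_cases h : (Monotone (P i).2 ∧ ∀ k, (P i).2 k ∈ Set.Icc (a i) (b i))
      · simp only [hP', if_pos h]; exact h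
      · simp only [hP', if_neg h]
        exact ⟨monotone_const, fun k => ⟨le_rfl, (hmem i hi).2.1⟩⟩
    have hstep : ∀ i ∈ S,
        (⨆ _ : (Monotone (P i).2 ∧ ∀ k, (P i).2 k ∈ Set.Icc (a i) (b i)),
          ∑ k ∈ Finset.range (P i).1, edist (f ((P i).2 (k+1))) (f ((P i).2 k))) ≤
        ∑ k ∈ Finset.range (P' i).1, edist (f ((P' i).2 (k+1))) (f ((P' i).2 k)) := by
      intro i hi
      by_cases h : (Monotone (P i).2 ∧ ∀ k, (P i).2 k ∈ Set.Icc (a i) (b i))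
      · rw [iSup_pos h]
        simp only [hP', if_pos h]
        exact le_rfl
      · rw [iSup_neg h]
        exact zero_le
    refine le_trans (Finset.sum_le_sum hstep) ?_
    set n : ι → ℕ := fun i => (P' i).1 with hn
    set u : ι → ℕ → ℝ := fun i => (P' i).2 with hu
    set S₀ : Finset ((_ : ι) × ℕ) := S.sigma (fun i => Finset.range (n i)) with hS₀
    set Sf : Finset ((_ : ι) × ℕ) := S₀.filter (fun q => u q.1 q.2 < u q.1 (q.2 + 1)) with hSf
    have hmemS₀ : ∀ q ∈ S₀, q.1 ∈ S ∧ q.2 < n q.1 := by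
      intro q hq
      rw [hS₀, Finset.mem_sigma] at hq
      exact ⟨hq.1, Finset.mem_range.1 hq.2⟩
    have humem : ∀ q ∈ S₀, u q.1 q.2 ∈ Set.Icc (a q.1) (b q.1) ∧
        u q.1 (q.2+1) ∈ Set.Icc (a q.1) (b q.1) ∧ u q.1 q.2 ≤ u q.1 (q.2+1) := by
      intro q hq
      have h := hP'prop q.1 (hmemS₀ q hq).1
      exact ⟨h.2 _, h.2 _, h.1 (Nat.le_succ _)⟩
    -- the lengths
    have hlen' : ∑ q ∈ Sf, (u q.1 (q.2+1) - u q.1 q.2) < δ := by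
      have h1 : ∑ q ∈ Sf, (u q.1 (q.2+1) - u q.1 q.2) ≤
          ∑ q ∈ S₀, (u q.1 (q.2+1) - u q.1 q.2) := by
        refine Finset.sum_le_sum_of_subset_of_nonneg (Finset.filter_subset _ _) ?_
        intro q hq _
        linarith [(humem q hq).2.2]
      have h2 : ∑ q ∈ S₀, (u q.1 (q.2+1) - u q.1 q.2) =
          ∑ i ∈ S, (u i (n i) - u i 0) := by
        rw [hS₀, Finset.sum_sigma]
        exact Finset.sum_congr rfl fun i _ => Finset.sum_range_sub (fun k => u i k) (n i)
      have h3 : ∑ i ∈ S, (u i (n i) - u i 0) ≤ ∑ i ∈ S, (b i - a i) := by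
        refine Finset.sum_le_sum fun i hi => ?_
        have h := hP'prop i hi
        have h4 := (h.2 (n i)).2
        have h5 := (h.2 0).1
        linarith
      linarith
    have hgabs := hδε ((_ : ι) × ℕ) inferInstance Sf
      (fun q => u q.1 q.2) (fun q => u q.1 (q.2+1))
      (by
        intro q hq
        rw [hSf, Finset.mem_filter] at hq
        have h := humem q hq.1
        exact ⟨(hmem q.1 (hmemS₀ q hq.1).1).1.trans h.1.1, hq.2,
          h.2.1.2.trans (hmem q.1 (hmemS₀ q hq.1).1).2.2⟩)
      (by
        intro q hq q' hq' hqq'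
        rw [hSf, Finset.mem_filter] at hq hq'
        have hq1 := humem q hq.1
        have hq1' := humem q' hq'.1
        by_cases hfst : q.1 = q'.1
        · -- same parent interval : use monotonicity
          obtain ⟨i, k⟩ := q
          obtain ⟨i', k'⟩ := q'
          simp only at hfst
          subst hfst
          have hkk' : k ≠ k' := fun h => hqq' (by rw [h])
          have hmono := (hP'prop i (hmemS₀ _ hq.1).1).1
          rcases lt_or_gt_of_ne hkk' with h | h
          · exact Or.inl (hmono (Nat.succ_le_of_lt h))
          · exact Or.inr (hmono (Nat.succ_le_of_lt h))
        · rcases hdisj q.1 (hmemS₀ q hq.1).1 q'.1 (hmemS₀ q' hq'.1).1 hfst with h | h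
          · exact Or.inl (le_trans hq1.2.1.2 (le_trans h hq1'.1.1))
          · exact Or.inr (le_trans hq1'.2.1.2 (le_trans h hq1.1.1)))
      hlen'
    -- now compute the sum of edist
    have hfinal : ∑ i ∈ S, ∑ k ∈ Finset.range (n i), edist (f (u i (k+1))) (f (u i k)) =
        ENNReal.ofReal (∑ q ∈ Sf, |g (u q.1 q.2) (u q.1 (q.2+1))|) := by
      rw [← Finset.sum_sigma S (fun i => Finset.range (n i))
        (fun q => edist (f (u q.1 (q.2+1))) (f (u q.1 q.2)))]
      rw [← Finset.sum_filter_of_ne (p := fun q => u q.1 q.2 < u q.1 (q.2+1))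
        (by
          intro q hq hne
          by_contra hlt
          have heq : u q.1 q.2 = u q.1 (q.2+1) :=
            le_antisymm (humem q hq).2.2 (not_lt.1 hlt)
          rw [heq] at hne
          exact hne (edist_self _))]
      rw [ENNReal.ofReal_sum_of_nonneg (fun q _ => abs_nonneg _)]
      refine Finset.sum_congr rfl fun q hq => ?_
      rw [hSf, Finset.mem_filter] at hq
      have h := humem q hq.1
      have hgv : f (u q.1 (q.2+1)) - f (u q.1 q.2) = g (u q.1 q.2) (u q.1 (q.2+1)) :=
        diF_eq hAB hadd ((hmem q.1 (hmemS₀ q hq.1).1).1.trans h.1.1) hq.2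
          (h.2.1.2.trans (hmem q.1 (hmemS₀ q hq.1).1).2.2)
      rw [edist_dist, Real.dist_eq, ← hgv]
    rw [hfinal]
    exact ENNReal.ofReal_le_ofReal hgabs.le
  -- single interval bound
  have Vone : ∀ ε > (0:ℝ), ∃ δ > (0:ℝ), ∀ a b : ℝ, A ≤ a → a ≤ b → b ≤ B → b - a < δ →
      eVariationOn f (Set.Icc a b) ≤ ENNReal.ofReal ε := by
    intro ε hε
    obtain ⟨δ, hδ, hδε⟩ := Vsum ε hε
    refine ⟨δ, hδ, fun a b ha hab hb hlen => ?_⟩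
    have := hδε ℕ inferInstance {0} (fun _ => a) (fun _ => b)
      (fun i _ => ⟨ha, hab, hb⟩) (by intro i hi j hj hij; simp at hi hj; omega)
      (by simpa using hlen)
    simpa using this
  -- bounded variation on [A, B]
  have hBV : BoundedVariationOn f (Set.Icc A B) := by
    obtain ⟨δ, hδ, hδ1⟩ := Vone 1 one_pos
    set K : ℕ := ⌈(B - A)/δ⌉₊ + 1 with hK
    have hKpos : (0:ℝ) < K := by positivity
    have hK0 : (K:ℝ) ≠ 0 := ne_of_gt hKpos
    have hL : (0:ℝ) < B - A := by linarith
    have hq0 : (0:ℝ) < (B-A)/K := div_pos hL hKpos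
    have h1 : (B - A)/δ < K := by
      rw [hK]
      push_cast
      exact lt_of_le_of_lt (Nat.le_ceil _) (by linarith)
    have hstep : (B - A)/K < δ := by
      rw [div_lt_iff₀ hKpos]
      rw [div_lt_iff₀ hδ] at h1
      nlinarith
    set x : ℕ → ℝ := fun k => A + k * ((B - A)/K) with hx
    have hxdiff : ∀ k : ℕ, x (k+1) - x k = (B-A)/K := by
      intro k
      rw [hx]
      push_cast
      ring
    have hxmono : ∀ k, x k ≤ x (k+1) := by
      intro k
      rw [← sub_nonneg, hxdiff k]
      exact hq0.le
    have hxmem : ∀ k ≤ K, x k ∈ Set.Icc A B := by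
      intro k hk
      have hkc : (k:ℝ) ≤ K := by exact_mod_cast hk
      have h2 : (0:ℝ) ≤ (k:ℝ) * ((B-A)/K) := mul_nonneg (Nat.cast_nonneg k) hq0.le
      have h3 : (k:ℝ) * ((B-A)/K) ≤ (K:ℝ) * ((B-A)/K) :=
        mul_le_mul_of_nonneg_right hkc hq0.le
      have h4 : (K:ℝ) * ((B-A)/K) = B - A := by field_simp
      constructor
      · rw [hx]; simp only; linarith
      · rw [hx]; simp only; linarith
    have key : ∀ k ≤ K, eVariationOn f (Set.Icc A (x k)) ≤ (k : ℝ≥0∞) * ENNReal.ofReal 1 := by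
      intro k
      induction k with
      | zero =>
          intro _
          have hx0 : x 0 = A := by rw [hx]; simp
          rw [hx0, Set.Icc_self]
          refine le_trans (le_of_eq (eVariationOn.subsingleton f ?_)) zero_le
          intro y hy z hz
          rw [Set.mem_singleton_iff] at hy hz
          rw [hy, hz]
      | succ k IH =>
          intro hk1
          have hkK : k ≤ K := Nat.le_of_succ_le hk1
          have hIH := IH hkK
          have hAxk : A ≤ x k := (hxmem k hkK).1
          have hIcc : eVariationOn f (Set.Icc A (x k)) + eVariationOn f (Set.Icc (x k) (x (k+1)))
              = eVariationOn f (Set.Icc A (x (k+1))) := by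
            have := eVariationOn.Icc_add_Icc f (s := (Set.univ : Set ℝ)) hAxk (hxmono k)
              (Set.mem_univ (x k))
            simpa [Set.univ_inter] using this
          rw [← hIcc]
          have hone : eVariationOn f (Set.Icc (x k) (x (k+1))) ≤ ENNReal.ofReal 1 := by
            refine hδ1 (x k) (x (k+1)) hAxk (hxmono k) (hxmem (k+1) hk1).2 ?_
            rw [hxdiff k]
            exact hstep
          calc eVariationOn f (Set.Icc A (x k)) + eVariationOn f (Set.Icc (x k) (x (k+1)))
              ≤ (k : ℝ≥0∞) * ENNReal.ofReal 1 + ENNReal.ofReal 1 := add_le_add hIH hone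
            _ = ((k+1 : ℕ) : ℝ≥0∞) * ENNReal.ofReal 1 := by
                push_cast
                ring
    have hxK : x K = B := by
      rw [hx]
      simp only
      field_simp
      ring
    have hfin2 := key K le_rfl
    rw [hxK] at hfin2
    have hfin : ((K:ℕ) : ℝ≥0∞) * ENNReal.ofReal 1 ≠ ∞ :=
      ENNReal.mul_ne_top (by simp) ENNReal.ofReal_ne_top
    exact ne_top_of_le_ne_top hfin hfin2
  have hLBV : LocallyBoundedVariationOn f (Set.Icc A B) :=
    hBV.locallyBoundedVariationOn
  have hABmem : A ∈ Set.Icc A B := ⟨le_rfl, hAB.le⟩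
  -- the variation function
  set V : ℝ → ℝ := fun y => variationOnFromTo f (Set.Icc A B) A (cl y) with hV
  have hIccsub : ∀ y z : ℝ, Set.Icc (cl y) (cl z) ⊆ Set.Icc A B := by
    intro y z
    exact Set.Icc_subset_Icc (diClamp_mem hAB.le y).1 (diClamp_mem hAB.le z).2
  have hVd : ∀ y z : ℝ, y ≤ z →
      V z - V y = (eVariationOn f (Set.Icc (cl y) (cl z))).toReal := by
    intro y z hyz
    have hc : cl y ≤ cl z := diClamp_mono hyz
    have h1 := variationOnFromTo.add hLBV hABmem (diClamp_mem hAB.le y) (diClamp_mem hAB.le z)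
    have h2 : variationOnFromTo f (Set.Icc A B) (cl y) (cl z) =
        (eVariationOn f (Set.Icc A B ∩ Set.Icc (cl y) (cl z))).toReal :=
      variationOnFromTo.eq_of_le f _ hc
    rw [Set.inter_eq_self_of_subset_right (hIccsub y z)] at h2
    rw [hV]
    simp only
    linarith
  have hVfin : ∀ y z : ℝ, eVariationOn f (Set.Icc (cl y) (cl z)) ≠ ∞ := by
    intro y z
    intro htop
    exact hBV (top_le_iff.1 (htop ▸ eVariationOn.mono f (hIccsub y z)))
  have hVmono : Monotone V := by
    intro y z hyz
    have := hVd y z hyz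
    have h2 : (0:ℝ) ≤ (eVariationOn f (Set.Icc (cl y) (cl z))).toReal := ENNReal.toReal_nonneg
    linarith
  have hfd : ∀ y z : ℝ, y ≤ z → |f z - f y| ≤ V z - V y := by
    intro y z hyz
    have hc : cl y ≤ cl z := diClamp_mono hyz
    rw [hVd y z hyz]
    have h1 : f z = f (cl z) := (diF_clamp hAB z).symm
    have h2 : f y = f (cl y) := (diF_clamp hAB y).symm
    rw [h1, h2]
    have h3 : edist (f (cl z)) (f (cl y)) ≤ eVariationOn f (Set.Icc (cl y) (cl z)) :=
      eVariationOn.edist_le f (Set.right_mem_Icc.2 hc) (Set.left_mem_Icc.2 hc)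
    have h4 : |f (cl z) - f (cl y)| = (edist (f (cl z)) (f (cl y))).toReal := by
      rw [edist_dist, Real.dist_eq, ENNReal.toReal_ofReal (abs_nonneg _)]
    rw [h4]
    exact ENNReal.toReal_mono (hVfin y z) h3
  -- p and q
  set p : ℝ → ℝ := fun y => (V y + f y)/2 with hp
  set q : ℝ → ℝ := fun y => (V y - f y)/2 with hq
  have hpmono : Monotone p := by
    intro y z hyz
    have h1 := hfd y z hyz
    rw [abs_le] at h1
    rw [hp]
    simp only
    linarith [h1.1]
  have hqmono : Monotone q := by
    intro y z hyz
    have h1 := hfd y z hyz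
    rw [abs_le] at h1
    rw [hq]
    simp only
    linarith [h1.2]
  -- modulus of continuity for V
  have hVcont : ∀ ε > (0:ℝ), ∃ δ > (0:ℝ), ∀ y z : ℝ, y ≤ z → z - y < δ → V z - V y ≤ ε := by
    intro ε hε
    obtain ⟨δ, hδ, hδε⟩ := Vone ε hε
    refine ⟨δ, hδ, fun y z hyz hlen => ?_⟩
    rw [hVd y z hyz]
    have hc : cl y ≤ cl z := diClamp_mono hyz
    have h1 := hδε (cl y) (cl z) (diClamp_mem hAB.le y).1 hc (diClamp_mem hAB.le z).2
      (lt_of_le_of_lt (diClamp_diff_le hyz) hlen)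
    calc (eVariationOn f (Set.Icc (cl y) (cl z))).toReal
        ≤ (ENNReal.ofReal ε).toReal := ENNReal.toReal_mono ENNReal.ofReal_ne_top h1
      _ = ε := ENNReal.toReal_ofReal hε.le
  have hmodcont : ∀ r : ℝ → ℝ, Monotone r → (∀ y z : ℝ, y ≤ z → r z - r y ≤ V z - V y) →
      Continuous r := by
    intro r hrmono hrV
    rw [Metric.continuous_iff]
    intro y ε hε
    obtain ⟨δ, hδ, hδε⟩ := hVcont (ε/2) (by linarith)
    refine ⟨δ, hδ, fun z hz => ?_⟩
    rw [Real.dist_eq] at hz ⊢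
    rcases le_total z y with h | h
    · have h1 : y - z < δ := by rw [abs_sub_comm] at hz; exact lt_of_le_of_lt (le_abs_self _) hz
      have h2 := hδε z y h h1
      have h3 := hrV z y h
      have h4 : 0 ≤ r y - r z := by have := hrmono h; linarith
      rw [abs_of_nonpos (by linarith)]
      linarith
    · have h1 : z - y < δ := lt_of_le_of_lt (le_abs_self _) hz
      have h2 := hδε y z h h1
      have h3 := hrV y z h
      have h4 : 0 ≤ r z - r y := by have := hrmono h; linarith
      rw [abs_of_nonneg h4]
      linarith
  have hpV : ∀ y z : ℝ, y ≤ z → p z - p y ≤ V z - V y := by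
    intro y z hyz
    have h1 := hfd y z hyz
    rw [abs_le] at h1
    rw [hp]; simp only; linarith [h1.2]
  have hqV : ∀ y z : ℝ, y ≤ z → q z - q y ≤ V z - V y := by
    intro y z hyz
    have h1 := hfd y z hyz
    rw [abs_le] at h1
    rw [hq]; simp only; linarith [h1.1]
  have hpcont : Continuous p := hmodcont p hpmono hpV
  have hqcont : Continuous q := hmodcont q hqmono hqV
  -- values outside [A, B]
  have hlow : ∀ y : ℝ, y ≤ A → V y = 0 ∧ f y = 0 := by
    intro y hy
    have h1 : cl y = A := by
      rw [hcl, diClamp, min_eq_left (le_trans hy hAB.le), max_eq_left hy]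
    constructor
    · rw [hV]; simp only [h1]; exact variationOnFromTo.self f _ A
    · rw [hf, diF, if_pos hy]
  have hhigh : ∀ y : ℝ, B ≤ y → V y = V B ∧ f y = f B := by
    intro y hy
    have h1 : cl y = B := by
      rw [hcl, diClamp, min_eq_right hy, max_eq_right hAB.le]
    have h2 : cl B = B := by
      rw [hcl, diClamp_of_mem ⟨hAB.le, le_rfl⟩]
    constructor
    · rw [hV]; simp only [h1, h2]
    · have h1' : diClamp A B y = B := by rw [← hcl]; exact h1
      have h2' : diClamp A B B = B := by rw [← hcl]; exact h2
      rw [hf, ← diF_clamp hAB y, ← diF_clamp hAB B, h1', h2']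
  -- Stieltjes functions
  set sp : StieltjesFunction ℝ := ⟨p, hpmono, fun y => hpcont.continuousWithinAt⟩ with hsp
  set sq : StieltjesFunction ℝ := ⟨q, hqmono, fun y => hqcont.continuousWithinAt⟩ with hsq
  have hp0 : p A = 0 := by
    rw [hp]; simp only
    rw [(hlow A le_rfl).1, (hlow A le_rfl).2]
    ring
  have hq0 : q A = 0 := by
    rw [hq]; simp only
    rw [(hlow A le_rfl).1, (hlow A le_rfl).2]
    ring
  have haux : ∀ r : ℝ → ℝ, (∀ y ≤ A, r y = r A) → (∀ y, B ≤ y → r y = r B) →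
      Tendsto r atBot (nhds (r A)) ∧ Tendsto r atTop (nhds (r B)) := by
    intro r hlo hhi
    constructor
    · refine Tendsto.congr' ?_ tendsto_const_nhds
      filter_upwards [eventually_le_atBot A] with y hy
      exact (hlo y hy).symm
    · refine Tendsto.congr' ?_ tendsto_const_nhds
      filter_upwards [eventually_ge_atTop B] with y hy
      exact (hhi y hy).symm
  have hplow : ∀ y ≤ A, p y = p A := by
    intro y hy
    rw [hp]; simp only
    rw [(hlow y hy).1, (hlow y hy).2, (hlow A le_rfl).1, (hlow A le_rfl).2]
  have hphigh : ∀ y, B ≤ y → p y = p B := by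
    intro y hy
    rw [hp]; simp only
    rw [(hhigh y hy).1, (hhigh y hy).2]
  have hqlow : ∀ y ≤ A, q y = q A := by
    intro y hy
    rw [hq]; simp only
    rw [(hlow y hy).1, (hlow y hy).2, (hlow A le_rfl).1, (hlow A le_rfl).2]
  have hqhigh : ∀ y, B ≤ y → q y = q B := by
    intro y hy
    rw [hq]; simp only
    rw [(hhigh y hy).1, (hhigh y hy).2]
  obtain ⟨hpbot, hptop⟩ := haux p hplow hphigh
  obtain ⟨hqbot, hqtop⟩ := haux q hqlow hqhigh
  -- finiteness
  have hPfin : IsFiniteMeasure sp.measure := by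
    refine ⟨?_⟩
    rw [sp.measure_univ hpbot hptop]
    exact ENNReal.ofReal_lt_top
  have hQfin : IsFiniteMeasure sq.measure := by
    refine ⟨?_⟩
    rw [sq.measure_univ hqbot hqtop]
    exact ENNReal.ofReal_lt_top
  have hleft : ∀ (r : ℝ → ℝ), Continuous r → ∀ x : ℝ, Function.leftLim r x = r x := by
    intro r hr x
    exact leftLim_eq_of_tendsto
      ((hr.tendsto x).mono_left nhdsWithin_le_nhds)
  -- boundary measure zero
  have hPIic : sp.measure (Set.Iic A) = 0 := by
    rw [sp.measure_Iic hpbot A]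
    simp
    exact le_rfl
  have hPIci : sp.measure (Set.Ici B) = 0 := by
    rw [sp.measure_Ici hptop B, hleft (⇑sp) hpcont B]
    simp
    exact le_rfl
  have hQIic : sq.measure (Set.Iic A) = 0 := by
    rw [sq.measure_Iic hqbot A]
    simp
    exact le_rfl
  have hQIci : sq.measure (Set.Ici B) = 0 := by
    rw [sq.measure_Ici hqtop B, hleft (⇑sq) hqcont B]
    simp
    exact le_rfl
  -- absolute continuity
  have hsmall : ∀ r : ℝ → ℝ, (∀ y z : ℝ, y ≤ z → r z - r y ≤ V z - V y) → Monotone r →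
      ∀ ε > (0:ℝ), ∃ δ > (0:ℝ), ∀ (S : Finset (Set ℝ)) (a b : Set ℝ → ℝ),
      (∀ i ∈ S, a i ≤ b i) → (∀ i ∈ S, ∀ j ∈ S, i ≠ j → b i ≤ a j ∨ b j ≤ a i) →
      (∑ i ∈ S, (b i - a i)) < δ → ∑ i ∈ S, (r (b i) - r (a i)) ≤ ε := by
    intro r hrV hrmono ε hε
    obtain ⟨δ, hδ, hδε⟩ := Vsum ε hε
    refine ⟨δ, hδ, fun S a b hab hdisj hlen => ?_⟩
    have h1 : ∑ i ∈ S, (r (b i) - r (a i)) ≤ ∑ i ∈ S, (V (b i) - V (a i)) :=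
      Finset.sum_le_sum fun i hi => hrV _ _ (hab i hi)
    refine le_trans h1 ?_
    have h2 : ∀ i ∈ S, V (b i) - V (a i) =
        (eVariationOn f (Set.Icc (cl (a i)) (cl (b i)))).toReal :=
      fun i hi => hVd _ _ (hab i hi)
    rw [Finset.sum_congr rfl h2]
    have h3 := hδε (Set ℝ) inferInstance S (fun i => cl (a i)) (fun i => cl (b i))
      (fun i hi => ⟨(diClamp_mem hAB.le _).1, diClamp_mono (hab i hi),
        (diClamp_mem hAB.le _).2⟩)
      (fun i hi j hj hij => by
        rcases hdisj i hi j hj hij with h | h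
        · exact Or.inl (diClamp_mono h)
        · exact Or.inr (diClamp_mono h))
      (lt_of_le_of_lt (Finset.sum_le_sum fun i hi => diClamp_diff_le (hab i hi)) hlen)
    rw [← ENNReal.toReal_sum (fun i hi => hVfin _ _)]
    calc (∑ i ∈ S, eVariationOn f (Set.Icc (cl (a i)) (cl (b i)))).toReal
        ≤ (ENNReal.ofReal ε).toReal := ENNReal.toReal_mono ENNReal.ofReal_ne_top h3
      _ = ε := ENNReal.toReal_ofReal hε.le
  have hPac : sp.measure ≪ (volume : Measure ℝ) :=
    aux_stieltjes_ac sp A B hPIic hPIci (hsmall p hpV hpmono)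
  have hQac : sq.measure ≪ (volume : Measure ℝ) :=
    aux_stieltjes_ac sq A B hQIic hQIci (hsmall q hqV hqmono)
  refine ⟨sp.measure, sq.measure, hPfin, hQfin, hPac, hQac, ?_⟩
  intro a b ha hab hb
  rw [sp.measure_Ioc, sq.measure_Ioc]
  have h1 : sp b - sp a = p b - p a := rfl
  have h2 : sq b - sq a = q b - q a := rfl
  rw [h1, h2]
  rw [ENNReal.toReal_ofReal (by have := hpmono hab.le; linarith),
    ENNReal.toReal_ofReal (by have := hqmono hab.le; linarith)]
  have h3 : p b - p a - (q b - q a) = f b - f a := by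
    rw [hp, hq]; simp only; ring
  rw [h3]
  exact (diF_eq hAB hadd ha hab hb).symm

end DI2


namespace Division

variable {A B : ℝ} (D : Division A B)

lemma P_le {i j : ℕ} (hij : i ≤ j) (hj : j ≤ D.n) : D.P i ≤ D.P j := by
  induction j with
  | zero =>
      have : i = 0 := Nat.le_zero.1 hij
      rw [this]
  | succ j IH =>
      rcases Nat.lt_or_ge i (j+1) with h | h
      · have hj' : j ≤ D.n := le_trans (Nat.le_succ j) hj
        have h1 : D.P i ≤ D.P j := IH (Nat.lt_succ_iff.1 h) hj'
        have h2 : D.P j < D.P (j+1) := D.mono j (Nat.lt_of_lt_of_le (Nat.lt_succ_self j) hj)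
        linarith
      · have : i = j+1 := le_antisymm hij h
        rw [this]

lemma P_mem {i : ℕ} (hi : i ≤ D.n) : A ≤ D.P i ∧ D.P i ≤ B := by
  constructor
  · have h := D.P_le (Nat.zero_le i) hi
    rw [D.first] at h
    exact h
  · have h := D.P_le hi le_rfl
    rw [D.last] at h
    exact h

lemma exists_mem {x : ℝ} (hx : x ∈ Set.Ioc A B) :
    ∃ i, i < D.n ∧ x ∈ Set.Ioc (D.P i) (D.P (i+1)) := by
  have hex : ∃ k, x ≤ D.P k := ⟨D.n, by rw [D.last]; exact hx.2⟩
  set k0 := Nat.find hex with hk0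
  have hk0le : x ≤ D.P k0 := Nat.find_spec hex
  have hk0n : k0 ≤ D.n := Nat.find_le (by rw [D.last]; exact hx.2)
  have hk0pos : 0 < k0 := by
    rcases Nat.eq_zero_or_pos k0 with h | h
    · exfalso
      rw [h] at hk0le
      rw [D.first] at hk0le
      exact absurd hk0le (not_le.2 hx.1)
    · exact h
  refine ⟨k0 - 1, ?_, ?_, ?_⟩
  · omega
  · have := Nat.find_min hex (m := k0 - 1) (by omega)
    push_neg at this
    exact this
  · have : k0 - 1 + 1 = k0 := by omega
    rw [this]
    exact hk0le

lemma mem_unique {i j : ℕ} (hi : i < D.n) (hj : j < D.n) {x : ℝ}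
    (hxi : x ∈ Set.Ioc (D.P i) (D.P (i+1))) (hxj : x ∈ Set.Ioc (D.P j) (D.P (j+1))) :
    i = j := by
  by_contra hij
  rcases Nat.lt_or_ge i j with h | h
  · have : D.P (i+1) ≤ D.P j := D.P_le (Nat.succ_le_of_lt h) (le_of_lt hj)
    exact absurd (lt_of_le_of_lt (le_trans hxi.2 this) hxj.1) (lt_irrefl x)
  · have h' : j < i := lt_of_le_of_ne h (Ne.symm hij)
    have : D.P (j+1) ≤ D.P i := D.P_le (Nat.succ_le_of_lt h') (le_of_lt hi)
    exact absurd (lt_of_le_of_lt (le_trans hxj.2 this) hxi.1) (lt_irrefl x)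

lemma iUnion_eq : (⋃ i ∈ Finset.range D.n, Set.Ioc (D.P i) (D.P (i+1))) = Set.Ioc A B := by
  apply Set.Subset.antisymm
  · refine Set.iUnion₂_subset fun i hi => ?_
    rw [Finset.mem_range] at hi
    intro x hx
    have h1 := (D.P_mem (le_of_lt hi)).1
    have h2 := (D.P_mem (Nat.succ_le_of_lt hi)).2
    exact ⟨lt_of_le_of_lt h1 hx.1, le_trans hx.2 h2⟩
  · intro x hx
    obtain ⟨i, hi, hmem⟩ := D.exists_mem hx
    exact Set.mem_biUnion (Finset.mem_range.2 hi) hmem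

end Division

/-- The Vitali family of all closed intervals (for Lebesgue measure on `ℝ`). -/
noncomputable def realVitali : VitaliFamily (volume : Measure ℝ) :=
  Vitali.vitaliFamily volume 6 (by
    intro x
    refine Filter.Eventually.frequently ?_
    filter_upwards [self_mem_nhdsWithin] with r (hr : 0 < r)
    rw [Real.volume_closedBall, Real.volume_closedBall]
    have h3 : ((6:ℝ≥0):ℝ≥0∞) = (6:ℝ≥0∞) := by norm_num
    have h2 : (6:ℝ≥0∞) * ENNReal.ofReal (2*r) = ENNReal.ofReal (12*r) := by
      rw [show (12:ℝ)*r = 6*(2*r) by ring, ENNReal.ofReal_mul (by norm_num : (0:ℝ) ≤ 6)]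
      norm_num
    rw [h3, h2]
    exact ENNReal.ofReal_le_ofReal (by linarith))

lemma realVitali_mem {x c d : ℝ} (hcd : c < d) (hx : x ∈ Set.Icc c d) :
    Set.Icc c d ∈ realVitali.setsAt x := by
  refine ⟨isClosed_Icc, ?_, d - c, ?_, ?_⟩
  · rw [interior_Icc]
    exact Set.nonempty_Ioo.2 hcd
  · intro y hy
    rw [Metric.mem_closedBall, Real.dist_eq, abs_le]
    constructor
    · linarith [hy.1, hy.2, hx.1, hx.2]
    · linarith [hy.1, hy.2, hx.1, hx.2]
  · rw [Real.volume_closedBall, Real.volume_Icc]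
    have h3 : ((6:ℝ≥0):ℝ≥0∞) = (6:ℝ≥0∞) := by norm_num
    have h2 : (6:ℝ≥0∞) * ENNReal.ofReal (d - c) = ENNReal.ofReal (6*(d - c)) := by
      rw [ENNReal.ofReal_mul (by norm_num : (0:ℝ) ≤ 6)]
      norm_num
    rw [h3, h2]
    exact ENNReal.ofReal_le_ofReal (by linarith)


end DensityIntegralAux

/-- (III.6.01): Density integral recovers the Lebesgue extension.  Let `g` be an additive
and absolutely continuous interval function on `[A, B]`.  Then `g` is represented by an
integrable a.e.-derivative `g'` (i.e. `g(I) = ∫_I g'`), and for every Lebesgue measurable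
set `E ⊆ [A, B]` and every Riemann succession of divisions `Dₙ` of `[A, B]`, the sums
`∑_{I ∈ Dₙ} g(I)·m(E ∩ I)/m(I)` converge to `g(E) = ∫_E g'(x) dx`; in particular the
upper and lower density integrals of `g` over `E` both equal `g(E)`. -/
theorem density_integral_eq_lebesgue_extension (g : ℝ → ℝ → ℝ) (A B : ℝ) (hAB : A < B)
    (hadd : ∀ a x b : ℝ, A ≤ a → a < x → x < b → b ≤ B → g a x + g x b = g a b)
    (hac : ∀ ε > (0 : ℝ), ∃ δ > (0 : ℝ), ∀ (m : ℕ) (a b : ℕ → ℝ),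
      (∀ i < m, A ≤ a i ∧ a i < b i ∧ b i ≤ B) →
      (∀ i < m, ∀ j < m, i ≠ j → b i ≤ a j ∨ b j ≤ a i) →
      (∑ i ∈ Finset.range m, (b i - a i)) < δ →
      |∑ i ∈ Finset.range m, g (a i) (b i)| < ε) :
    ∃ g' : ℝ → ℝ, IntegrableOn g' (Set.Icc A B) volume ∧
      (∀ a b : ℝ, A ≤ a → a < b → b ≤ B → g a b = ∫ x in Set.Ioc a b, g' x) ∧
      ∀ (E : Set ℝ), MeasurableSet E → E ⊆ Set.Icc A B →
        ∀ D : ℕ → Division A B, IsRiemannSuccession D →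
          Filter.Tendsto
            (fun n => ∑ i ∈ Finset.range (D n).n,
              g ((D n).P i) ((D n).P (i + 1)) *
                (volume (E ∩ Set.Ioc ((D n).P i) ((D n).P (i + 1)))).toReal /
                  ((D n).P (i + 1) - (D n).P i))
            Filter.atTop (nhds (∫ x in E, g' x)) := by
  classical
  obtain ⟨μP, μQ, hPfin, hQfin, hPac, hQac, hrep⟩ := di_exists hAB hadd hac
  haveI := hPfin; haveI := hQfin
  set g' : ℝ → ℝ := fun x =>
    (μP.rnDeriv volume x).toReal - (μQ.rnDeriv volume x).toReal with hg'
  have hg'meas : Measurable g' :=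
    ((Measure.measurable_rnDeriv μP volume).ennreal_toReal).sub
      ((Measure.measurable_rnDeriv μQ volume).ennreal_toReal)
  have hg'int : Integrable g' volume :=
    (Measure.integrable_toReal_rnDeriv).sub (Measure.integrable_toReal_rnDeriv)
  have hval : ∀ s : Set ℝ, ∫ x in s, g' x = (μP s).toReal - (μQ s).toReal := by
    intro s
    rw [hg']
    rw [integral_sub (Measure.integrable_toReal_rnDeriv.integrableOn)
      (Measure.integrable_toReal_rnDeriv.integrableOn)]
    rw [Measure.setIntegral_toReal_rnDeriv hPac s, Measure.setIntegral_toReal_rnDeriv hQac s]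
    rfl
  have hgrep : ∀ a b : ℝ, A ≤ a → a < b → b ≤ B → g a b = ∫ x in Set.Ioc a b, g' x := by
    intro a b ha hab hb
    rw [hval]
    exact hrep a b ha hab hb
  refine ⟨g', hg'int.integrableOn, hgrep, ?_⟩
  intro E hE hEsub D hD
  set θ : ℕ → ℕ → ℝ := fun n i =>
    (volume (E ∩ Set.Ioc ((D n).P i) ((D n).P (i+1)))).toReal /
      ((D n).P (i+1) - (D n).P i) with hθ
  set h : ℕ → ℝ → ℝ := fun n x => ∑ i ∈ Finset.range (D n).n,
    Set.indicator (Set.Ioc ((D n).P i) ((D n).P (i+1))) (fun _ => θ n i) x with hh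
  have hlen : ∀ n, ∀ i < (D n).n, 0 < (D n).P (i+1) - (D n).P i :=
    fun n i hi => sub_pos.2 ((D n).mono i hi)
  have hθ01 : ∀ n, ∀ i < (D n).n, 0 ≤ θ n i ∧ θ n i ≤ 1 := by
    intro n i hi
    have hl := hlen n i hi
    constructor
    · apply div_nonneg ENNReal.toReal_nonneg hl.le
    · rw [div_le_one hl]
      have h1 : volume (E ∩ Set.Ioc ((D n).P i) ((D n).P (i+1))) ≤
          ENNReal.ofReal ((D n).P (i+1) - (D n).P i) := by
        rw [← Real.volume_Ioc]
        exact measure_mono Set.inter_subset_right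
      calc (volume (E ∩ Set.Ioc ((D n).P i) ((D n).P (i+1)))).toReal
          ≤ (ENNReal.ofReal ((D n).P (i+1) - (D n).P i)).toReal :=
            ENNReal.toReal_mono ENNReal.ofReal_ne_top h1
        _ = (D n).P (i+1) - (D n).P i := ENNReal.toReal_ofReal hl.le
  have hhval : ∀ n, ∀ i < (D n).n, ∀ x ∈ Set.Ioc ((D n).P i) ((D n).P (i+1)),
      h n x = θ n i := by
    intro n i hi x hx
    rw [hh]
    simp only
    rw [Finset.sum_eq_single_of_mem i (Finset.mem_range.2 hi)]
    · rw [Set.indicator_of_mem hx]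
    · intro j hj hji
      rw [Set.indicator_of_notMem]
      intro hxj
      exact hji ((D n).mem_unique (Finset.mem_range.1 hj) hi hxj hx)
  have hh01 : ∀ n x, 0 ≤ h n x ∧ h n x ≤ 1 := by
    intro n x
    by_cases hx : ∃ i < (D n).n, x ∈ Set.Ioc ((D n).P i) ((D n).P (i+1))
    · obtain ⟨i, hi, hmem⟩ := hx
      rw [hhval n i hi x hmem]
      exact hθ01 n i hi
    · push_neg at hx
      have : h n x = 0 := by
        rw [hh]
        simp only
        refine Finset.sum_eq_zero fun j hj => ?_
        exact Set.indicator_of_notMem (hx j (Finset.mem_range.1 hj)) _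
      rw [this]
      norm_num
  have hmeas_h : ∀ n, Measurable (h n) := by
    intro n
    rw [hh]
    exact Finset.measurable_sum _ fun i _ =>
      (measurable_const.indicator measurableSet_Ioc)
  have hint_gh : ∀ n, Integrable (fun x => g' x * h n x) volume := by
    intro n
    refine hg'int.abs.mono' ((hg'meas.mul (hmeas_h n)).aestronglyMeasurable) ?_
    refine Filter.Eventually.of_forall fun x => ?_
    rw [Real.norm_eq_abs, abs_mul]
    calc |g' x| * |h n x| ≤ |g' x| * 1 := by
          refine mul_le_mul_of_nonneg_left ?_ (abs_nonneg _)
          rw [abs_of_nonneg (hh01 n x).1]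
          exact (hh01 n x).2
      _ = |g' x| := mul_one _
  -- Claim A
  have hA : ∀ n, (∑ i ∈ Finset.range (D n).n,
      g ((D n).P i) ((D n).P (i + 1)) *
        (volume (E ∩ Set.Ioc ((D n).P i) ((D n).P (i + 1)))).toReal /
          ((D n).P (i + 1) - (D n).P i)) = ∫ x in Set.Ioc A B, g' x * h n x := by
    intro n
    have hsplit : ∫ x in Set.Ioc A B, g' x * h n x
        = ∑ i ∈ Finset.range (D n).n,
            ∫ x in Set.Ioc ((D n).P i) ((D n).P (i+1)), g' x * h n x := by
      rw [← (D n).iUnion_eq]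
      refine integral_biUnion_finset (Finset.range (D n).n)
        (fun i _ => measurableSet_Ioc) ?_ ?_
      · intro i hi j hj hij
        simp only [Function.onFun]
        rw [Set.disjoint_left]
        intro x hxi hxj
        exact hij ((D n).mem_unique (Finset.mem_range.1 (by exact hi))
          (Finset.mem_range.1 (by exact hj)) hxi hxj)
      · intro i _
        exact (hint_gh n).integrableOn
    rw [hsplit]
    refine Finset.sum_congr rfl fun i hi => ?_
    have hilt := Finset.mem_range.1 hi
    have hPa := ((D n).P_mem (le_of_lt hilt)).1
    have hPb := ((D n).P_mem (Nat.succ_le_of_lt hilt)).2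
    have hPlt := (D n).mono i hilt
    have h1 : ∫ x in Set.Ioc ((D n).P i) ((D n).P (i+1)), g' x * h n x
        = ∫ x in Set.Ioc ((D n).P i) ((D n).P (i+1)), g' x * θ n i := by
      refine setIntegral_congr_fun measurableSet_Ioc fun x hx => ?_
      rw [hhval n i hilt x hx]
    rw [h1]
    have h2 : ∫ x in Set.Ioc ((D n).P i) ((D n).P (i+1)), g' x * θ n i
        = (∫ x in Set.Ioc ((D n).P i) ((D n).P (i+1)), g' x) * θ n i :=
      integral_mul_const _ _
    rw [h2, ← hgrep _ _ hPa hPlt hPb]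
    rw [mul_div_assoc]
  -- Claim C
  have hC : ∫ x in Set.Ioc A B, g' x * Set.indicator E 1 x = ∫ x in E, g' x := by
    have h1 : ∀ x, g' x * Set.indicator E 1 x = Set.indicator E g' x := by
      intro x
      by_cases hx : x ∈ E <;> simp [hx]
    rw [integral_congr_ae (Filter.Eventually.of_forall h1)]
    rw [integral_indicator hE]
    rw [Measure.restrict_restrict hE]
    apply setIntegral_congr_set
    rw [MeasureTheory.ae_eq_set]
    constructor
    · refine measure_mono_null (fun y hy => ?_) measure_empty
      exact absurd hy.1.1 hy.2
    · refine measure_mono_null (fun y hy => ?_) (Real.volume_singleton (a := A))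
      have hyE := hy.1
      have hyIcc := hEsub hyE
      have hnot : y ∉ Set.Ioc A B := fun hcon => hy.2 ⟨hyE, hcon⟩
      have : y = A := by
        by_contra hne
        exact hnot ⟨lt_of_le_of_ne hyIcc.1 (Ne.symm hne), hyIcc.2⟩
      exact this
  -- a.e. convergence via the Vitali covering theorem
  have hdens := realVitali.ae_tendsto_measure_inter_div_of_measurableSet hE
  have hlim : ∀ᵐ x ∂(volume.restrict (Set.Ioc A B)),
      Tendsto (fun n => g' x * h n x) atTop (nhds (g' x * Set.indicator E 1 x)) := by
    filter_upwards [ae_restrict_of_ae hdens, ae_restrict_mem measurableSet_Ioc]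
      with x hx hxmem
    choose idx hidxlt hidxmem using fun n : ℕ => (D n).exists_mem hxmem
    set J : ℕ → Set ℝ := fun n => Set.Icc ((D n).P (idx n)) ((D n).P (idx n + 1)) with hJ
    have hJtend : Tendsto J atTop (realVitali.filterAt x) := by
      rw [VitaliFamily.tendsto_filterAt_iff]
      constructor
      · exact Filter.Eventually.of_forall fun n =>
          realVitali_mem ((D n).mono _ (hidxlt n)) (Set.Ioc_subset_Icc_self (hidxmem n))
      · intro ε hε
        obtain ⟨N, hN⟩ := hD ε hε
        rw [Filter.eventually_atTop]
        refine ⟨N, fun n hn y hy => ?_⟩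
        rw [Metric.mem_closedBall, Real.dist_eq, abs_le]
        have hx1 := (hidxmem n).1
        have hx2 := (hidxmem n).2
        have hlt := hN n hn (idx n) (hidxlt n)
        have hy1 := hy.1
        have hy2 := hy.2
        constructor <;> [linarith; linarith]
    have hratio := hx.comp hJtend
    have hseteq : ∀ n, volume (E ∩ J n) =
        volume (E ∩ Set.Ioc ((D n).P (idx n)) ((D n).P (idx n + 1))) := by
      intro n
      apply le_antisymm
      · calc volume (E ∩ J n)
            ≤ volume ((E ∩ Set.Ioc ((D n).P (idx n)) ((D n).P (idx n + 1)))
              ∪ {(D n).P (idx n)}) := by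
              refine measure_mono fun y hy => ?_
              rcases eq_or_ne y ((D n).P (idx n)) with rfl | hne
              · exact Or.inr rfl
              · exact Or.inl ⟨hy.1, lt_of_le_of_ne hy.2.1 (Ne.symm hne), hy.2.2⟩
          _ ≤ volume (E ∩ Set.Ioc ((D n).P (idx n)) ((D n).P (idx n + 1)))
              + volume {(D n).P (idx n)} := measure_union_le _ _
          _ = volume (E ∩ Set.Ioc ((D n).P (idx n)) ((D n).P (idx n + 1))) := by
              rw [Real.volume_singleton, add_zero]
      · exact measure_mono (Set.inter_subset_inter_right E Set.Ioc_subset_Icc_self)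
    have hhx : ∀ n, h n x = ((volume (E ∩ J n)) / volume (J n)).toReal := by
      intro n
      rw [hhval n (idx n) (hidxlt n) x (hidxmem n)]
      rw [hseteq n]
      have hJvol : volume (J n) = ENNReal.ofReal ((D n).P (idx n + 1) - (D n).P (idx n)) := by
        rw [hJ]
        exact Real.volume_Icc
      rw [hJvol, ENNReal.toReal_div, ENNReal.toReal_ofReal (hlen n _ (hidxlt n)).le]
    have hindne : Set.indicator E (1 : ℝ → ENNReal) x ≠ ⊤ := by
      by_cases hxE : x ∈ E <;> simp [hxE]
    have htoReal : Tendsto (fun n => ((volume (E ∩ J n)) / volume (J n)).toReal) atTop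
        (nhds ((Set.indicator E (1 : ℝ → ENNReal) x).toReal)) :=
      (ENNReal.tendsto_toReal hindne).comp hratio
    have hindval : (Set.indicator E (1 : ℝ → ENNReal) x).toReal = Set.indicator E 1 x := by
      by_cases hxE : x ∈ E <;> simp [hxE]
    rw [hindval] at htoReal
    have hconv : Tendsto (fun n => h n x) atTop (nhds (Set.indicator E 1 x)) := by
      refine Tendsto.congr (fun n => (hhx n).symm) htoReal
    exact hconv.const_mul (g' x)
  -- dominated convergence
  have hdct := tendsto_integral_of_dominated_convergence (μ := volume.restrict (Set.Ioc A B))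
    (F := fun n x => g' x * h n x) (f := fun x => g' x * Set.indicator E 1 x)
    (bound := fun x => |g' x|)
    (fun n => ((hg'meas.mul (hmeas_h n)).aestronglyMeasurable))
    (hg'int.abs.integrableOn)
    (fun n => Filter.Eventually.of_forall fun x => by
      rw [Real.norm_eq_abs, abs_mul]
      calc |g' x| * |h n x| ≤ |g' x| * 1 := by
            refine mul_le_mul_of_nonneg_left ?_ (abs_nonneg _)
            rw [abs_of_nonneg (hh01 n x).1]
            exact (hh01 n x).2
        _ = |g' x| := mul_one _)
    hlim
  rw [← hC]
  exact Tendsto.congr (fun n => (hA n).symm) hdct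
end
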